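/- arXiv:1609.09596 — 6 statements merged into one kernel-verified Lean document; each statement's English description precedes it below -/
import Mathlib

section
/- Let 𝒜 be a set of vectors in ℂ^M and suppose Y ∈ ℂ^{M×L} admits a representation Y = Σ_{k=1}^K a_k s_k where a_1,…,a_K ∈ 𝒜 are distinct and each row vector s_k ∈ ℂ^{1×L} is nonzero. If 2K < spark(𝒜) − 1 + rank(Y), then this representation is unique: for any K' ≤ K, any distinct b_1,…,b_{K'} ∈ 𝒜 and any nonzero row vectors t_1,…,t_{K'} ∈ ℂ^{1×L} with Y = Σ_{j=1}^{K'} b_j t_j, one has K' = K and the set of pairs {(b_j, t_j)} equals the set of pairs {(a_k, s_k)}. -/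
open Matrix

/-- The spark of a set `𝒜` of vectors: the smallest cardinality of a finite linearly
dependent subset of `𝒜` (`⊤` if every finite subset is linearly independent). -/
noncomputable def spark {ι : Type*} (𝒜 : Set (ι → ℂ)) : ℕ∞ :=
  sInf {n : ℕ∞ | ∃ S : Finset (ι → ℂ), ↑S ⊆ 𝒜 ∧
    ¬ LinearIndependent ℂ (fun v : {x // x ∈ S} => (v : ι → ℂ)) ∧ n = (S.card : ℕ∞)}

open Finset Submodule Module Function

private lemma spark_le_card {ι : Type*} {𝒜 : Set (ι → ℂ)} {S : Finset (ι → ℂ)}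
    (hS : ↑S ⊆ 𝒜)
    (hdep : ¬ LinearIndependent ℂ (fun v : {x // x ∈ S} => (v : ι → ℂ))) :
    spark 𝒜 ≤ (S.card : ℕ∞) :=
  sInf_le ⟨S, hS, hdep, rfl⟩

private lemma spark_le_finrank_add_one {ι : Type*} {𝒜 : Set (ι → ℂ)} {S : Finset (ι → ℂ)}
    (hS : ↑S ⊆ 𝒜)
    (hlt : finrank ℂ (span ℂ (S : Set (ι → ℂ))) < S.card) :
    spark 𝒜 ≤ ((finrank ℂ (span ℂ (S : Set (ι → ℂ))) + 1 : ℕ) : ℕ∞) := by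
  classical
  obtain ⟨b, hbS, hspan, hbli⟩ := exists_linearIndependent ℂ (S : Set (ι → ℂ))
  have hbfin : b.Finite := S.finite_toSet.subset hbS
  haveI : Fintype b := hbfin.fintype
  have hcardb : b.toFinset.card = finrank ℂ (span ℂ (S : Set (ι → ℂ))) := by
    rw [← hspan, finrank_span_set_eq_card hbli]
  obtain ⟨v, hvS, hvb⟩ : ∃ v ∈ S, v ∉ b.toFinset := by
    by_contra h
    push_neg at h
    have hsub : S ⊆ b.toFinset := fun x hx => h x hx
    have := Finset.card_le_card hsub
    omega
  have hvb' : v ∉ b := by simpa using hvb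
  set T : Finset (ι → ℂ) := insert v b.toFinset with hT
  have hTcoe : (T : Set (ι → ℂ)) = insert v b := by simp [hT]
  have hT𝒜 : (T : Set (ι → ℂ)) ⊆ 𝒜 := by
    rw [hTcoe]
    exact Set.insert_subset (hS hvS) (hbS.trans hS)
  have hdep : ¬ LinearIndependent ℂ (fun x : {x // x ∈ T} => (x : ι → ℂ)) := by
    intro hind
    have hind' : LinearIndependent ℂ (fun x : ↥(insert v b) => (x : ι → ℂ)) := by
      rw [← hTcoe]; exact hind
    have hnot := ((linearIndepOn_id_insert hvb').mp hind').2
    have hv : v ∈ span ℂ b := by rw [hspan]; exact subset_span hvS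
    exact hnot hv
  have hcardT : T.card = finrank ℂ (span ℂ (S : Set (ι → ℂ))) + 1 := by
    rw [hT, Finset.card_insert_of_notMem hvb, hcardb]
  calc spark 𝒜 ≤ (T.card : ℕ∞) := spark_le_card hT𝒜 hdep
    _ = _ := by rw [hcardT]

theorem stmt0 {M L K : ℕ} (𝒜 : Set (Fin M → ℂ))
    (a : Fin K → (Fin M → ℂ)) (s : Fin K → (Fin L → ℂ))
    (ha : ∀ k, a k ∈ 𝒜) (hainj : Function.Injective a) (hs : ∀ k, s k ≠ 0)
    (Y : Matrix (Fin M) (Fin L) ℂ)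
    (hY : Y = ∑ k, Matrix.vecMulVec (a k) (s k))
    (hcond : ((2 * K : ℕ) : ℕ∞) < spark 𝒜 - 1 + (Y.rank : ℕ∞))
    (K' : ℕ) (hK' : K' ≤ K)
    (b : Fin K' → (Fin M → ℂ)) (t : Fin K' → (Fin L → ℂ))
    (hb : ∀ j, b j ∈ 𝒜) (hbinj : Function.Injective b) (ht : ∀ j, t j ≠ 0)
    (hY' : Y = ∑ j, Matrix.vecMulVec (b j) (t j)) :
    K' = K ∧
      Set.range (fun j => (b j, t j)) = Set.range (fun k => (a k, s k)) := by
  classical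
  set σ : (Fin M → ℂ) → (Fin L → ℂ) := Function.extend a s (fun _ => 0) with hσdef
  set τ : (Fin M → ℂ) → (Fin L → ℂ) := Function.extend b t (fun _ => 0) with hτdef
  have hσa : ∀ k, σ (a k) = s k := fun k => hainj.extend_apply _ _ _
  have hτb : ∀ j, τ (b j) = t j := fun j => hbinj.extend_apply _ _ _
  have hσ0 : ∀ v, v ∉ Set.range a → σ v = 0 := fun v hv =>
    Function.extend_apply' _ _ _ (by simpa [Set.mem_range] using hv)
  have hτ0 : ∀ v, v ∉ Set.range b → τ v = 0 := fun v hv =>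
    Function.extend_apply' _ _ _ (by simpa [Set.mem_range] using hv)
  set w : (Fin M → ℂ) → (Fin L → ℂ) := fun v => σ v - τ v with hwdef
  set 𝒞 : Finset (Fin M → ℂ) := Finset.univ.image a ∪ Finset.univ.image b with h𝒞def
  have hsubA : Finset.univ.image a ⊆ 𝒞 := by rw [h𝒞def]; exact Finset.subset_union_left
  have hsubB : Finset.univ.image b ⊆ 𝒞 := by rw [h𝒞def]; exact Finset.subset_union_right
  have hYσ : Y = ∑ v ∈ 𝒞, vecMulVec v (σ v) := by
    have himg : ∑ v ∈ Finset.univ.image a, vecMulVec v (σ v) = ∑ k, vecMulVec (a k) (s k) := by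
      rw [Finset.sum_image (f := fun v => vecMulVec v (σ v)) (fun x _ y _ h => hainj h)]
      exact Finset.sum_congr rfl fun k _ => by rw [hσa]
    rw [hY, ← himg]
    refine Finset.sum_subset hsubA fun v hv hvn => ?_
    have h0 : σ v = 0 := hσ0 v (by simpa [mem_image_univ_iff_mem_range] using hvn)
    ext i l
    simp [vecMulVec_apply, h0]
  have hYτ : Y = ∑ v ∈ 𝒞, vecMulVec v (τ v) := by
    have himg : ∑ v ∈ Finset.univ.image b, vecMulVec v (τ v) = ∑ j, vecMulVec (b j) (t j) := by
      rw [Finset.sum_image (f := fun v => vecMulVec v (τ v)) (fun x _ y _ h => hbinj h)]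
      exact Finset.sum_congr rfl fun j _ => by rw [hτb]
    rw [hY', ← himg]
    refine Finset.sum_subset hsubB fun v hv hvn => ?_
    have h0 : τ v = 0 := hτ0 v (by simpa [mem_image_univ_iff_mem_range] using hvn)
    ext i l
    simp [vecMulVec_apply, h0]
  have hWsum : ∑ v ∈ 𝒞, vecMulVec v (w v) = 0 := by
    have hsplit : ∀ v : Fin M → ℂ, vecMulVec v (w v) = vecMulVec v (σ v) - vecMulVec v (τ v) := by
      intro v; ext i l
      simp only [vecMulVec_apply, Matrix.sub_apply, hwdef, Pi.sub_apply]
      ring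
    simp_rw [hsplit]
    rw [Finset.sum_sub_distrib, ← hYσ, ← hYτ, sub_self]
  have hcol0 : ∀ l, ∑ v ∈ 𝒞, (w v l) • v = 0 := by
    intro l
    funext i
    have h1 := congrFun (congrFun hWsum i) l
    simp only [Matrix.sum_apply, vecMulVec_apply, Matrix.zero_apply] at h1
    simp only [Finset.sum_apply, Pi.smul_apply, smul_eq_mul, Pi.zero_apply]
    calc ∑ v ∈ 𝒞, w v l * v i = ∑ v ∈ 𝒞, v i * w v l := by
          exact Finset.sum_congr rfl fun v _ => mul_comm _ _
      _ = 0 := h1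
  by_cases hw0 : ∀ v ∈ 𝒞, w v = 0
  · -- easy case: representations coincide
    have hab : ∀ k, ∃ j, b j = a k ∧ t j = s k := by
      intro k
      have hmem : a k ∈ 𝒞 :=
        hsubA (Finset.mem_image_of_mem a (Finset.mem_univ k))
      have hw : σ (a k) = τ (a k) := by
        have h0 := hw0 _ hmem
        rw [hwdef] at h0
        exact sub_eq_zero.mp h0
      have hne : τ (a k) ≠ 0 := by rw [← hw, hσa]; exact hs k
      have hrange : a k ∈ Set.range b := by
        by_contra h; exact hne (hτ0 _ h)
      obtain ⟨j, hj⟩ := hrange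
      exact ⟨j, hj, by rw [← hτb j, hj, ← hw, hσa]⟩
    have hba : ∀ j, ∃ k, a k = b j ∧ s k = t j := by
      intro j
      have hmem : b j ∈ 𝒞 :=
        hsubB (Finset.mem_image_of_mem b (Finset.mem_univ j))
      have hw : σ (b j) = τ (b j) := by
        have h0 := hw0 _ hmem
        rw [hwdef] at h0
        exact sub_eq_zero.mp h0
      have hne : σ (b j) ≠ 0 := by rw [hw, hτb]; exact ht j
      have hrange : b j ∈ Set.range a := by
        by_contra h; exact hne (hσ0 _ h)
      obtain ⟨k, hk⟩ := hrange
      exact ⟨k, hk, by rw [← hσa k, hk, hw, hτb]⟩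
    choose e he1 he2 using hab
    have einj : Function.Injective e := by
      intro k k' h
      apply hainj
      rw [← he1 k, ← he1 k', h]
    have hKK' : K ≤ K' := by simpa using Fintype.card_le_of_injective e einj
    refine ⟨by omega, ?_⟩
    ext p
    simp only [Set.mem_range]
    constructor
    · rintro ⟨j, rfl⟩
      obtain ⟨k, h1, h2⟩ := hba j
      exact ⟨k, by rw [h1, h2]⟩
    · rintro ⟨k, rfl⟩
      exact ⟨e k, by rw [he1, he2]⟩
  · -- hard case: derive a contradiction
    exfalso
    push_neg at hw0
    obtain ⟨v₀, hv₀𝒞, hv₀⟩ := hw0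
    set S : Finset (Fin M → ℂ) := 𝒞.filter (fun v => w v ≠ 0) with hSdef
    have hS𝒞 : S ⊆ 𝒞 := Finset.filter_subset _ _
    have h𝒞𝒜 : (𝒞 : Set (Fin M → ℂ)) ⊆ 𝒜 := by
      intro v hv
      rw [Finset.mem_coe, h𝒞def, Finset.mem_union] at hv
      rcases hv with hv | hv
      · obtain ⟨k, -, rfl⟩ := Finset.mem_image.mp hv
        exact ha k
      · obtain ⟨j, -, rfl⟩ := Finset.mem_image.mp hv
        exact hb j
    have hS𝒜 : (S : Set (Fin M → ℂ)) ⊆ 𝒜 :=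
      fun v hv => h𝒞𝒜 (Finset.coe_subset.mpr hS𝒞 hv)
    have hwS : ∀ v ∈ 𝒞, v ∉ S → w v = 0 := by
      intro v hv hvn
      by_contra h
      exact hvn (Finset.mem_filter.mpr ⟨hv, h⟩)
    have hv₀S : v₀ ∈ S := Finset.mem_filter.mpr ⟨hv₀𝒞, hv₀⟩
    set φ : ({x // x ∈ S} → ℂ) →ₗ[ℂ] (Fin M → ℂ) :=
      Fintype.linearCombination ℂ (fun v : {x // x ∈ S} => (v : Fin M → ℂ)) with hφdef
    set colW : Fin L → ({x // x ∈ S} → ℂ) := fun l v => w v l with hcolWdef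
    have hφcol : ∀ l, φ (colW l) = 0 := by
      intro l
      have hstep : φ (colW l) = ∑ v ∈ S, w v l • v := by
        rw [hφdef, Fintype.linearCombination_apply]
        exact Finset.sum_coe_sort S (fun v => w v l • (v : Fin M → ℂ))
      rw [hstep, Finset.sum_subset hS𝒞 (fun v hv hvn => by rw [hwS v hv hvn]; simp)]
      exact hcol0 l
    set Wcol : Submodule ℂ ({x // x ∈ S} → ℂ) := span ℂ (Set.range colW) with hWcoldef
    have hWker : Wcol ≤ LinearMap.ker φ := by
      rw [hWcoldef, span_le]
      rintro _ ⟨l, rfl⟩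
      exact hφcol l
    set rC := finrank ℂ (span ℂ (S : Set (Fin M → ℂ))) with hrCdef
    set rW := finrank ℂ Wcol with hrWdef
    have hrange : LinearMap.range φ = span ℂ (S : Set (Fin M → ℂ)) := by
      rw [hφdef, Fintype.range_linearCombination]
      congr 1
      rw [Subtype.range_coe_subtype, Finset.setOf_mem]
    have hrn : rC + finrank ℂ (LinearMap.ker φ) = S.card := by
      have h := LinearMap.finrank_range_add_finrank_ker φ
      rw [hrange] at h
      rwa [Module.finrank_fintype_fun_eq_card, Fintype.card_coe] at h
    have hrWker : rW ≤ finrank ℂ (LinearMap.ker φ) := Submodule.finrank_mono hWker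
    have h1 : rC + rW ≤ S.card := by omega
    have hrWpos : 0 < rW := by
      obtain ⟨l₀, hl₀⟩ : ∃ l, w v₀ l ≠ 0 := by
        by_contra h; push_neg at h; exact hv₀ (funext h)
      have hmem : colW l₀ ∈ Wcol := subset_span (Set.mem_range_self _)
      have hne : colW l₀ ≠ 0 := by
        intro h
        exact hl₀ (by simpa [hcolWdef] using congrFun h ⟨v₀, hv₀S⟩)
      rcases Nat.eq_zero_or_pos rW with h | h
      · exfalso
        have hbot : Wcol = ⊥ := Submodule.finrank_eq_zero.mp h
        rw [hbot, Submodule.mem_bot] at hmem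
        exact hne hmem
      · exact h
    have hrCS : rC < S.card := by omega
    have hsparkle : spark 𝒜 ≤ ((rC + 1 : ℕ) : ℕ∞) := spark_le_finrank_add_one hS𝒜 hrCS
    -- rank Y bound
    set P : Finset (Fin M → ℂ) := Finset.univ.image a \ Finset.univ.image b with hPdef
    set O : Finset (Fin M → ℂ) := Finset.univ.image a ∩ Finset.univ.image b with hOdef
    have hPS : P ⊆ S := by
      intro v hv
      rw [hPdef, Finset.mem_sdiff] at hv
      obtain ⟨hva, hvb⟩ := hv
      refine Finset.mem_filter.mpr ⟨hsubA hva, ?_⟩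
      obtain ⟨k, -, rfl⟩ := Finset.mem_image.mp hva
      have hτz : τ (a k) = 0 := hτ0 _ (by simpa [mem_image_univ_iff_mem_range] using hvb)
      rw [hwdef]
      simp only [hσa, hτz, sub_zero]
      exact hs k
    set ρ : ({x // x ∈ S} → ℂ) →ₗ[ℂ] ({x // x ∈ P} → ℂ) :=
      LinearMap.funLeft ℂ ℂ (fun v : {x // x ∈ P} => (⟨v.1, hPS v.2⟩ : {x // x ∈ S})) with hρdef
    set Φ₁ : ({x // x ∈ P} → ℂ) →ₗ[ℂ] (Fin M → ℂ) :=
      Fintype.linearCombination ℂ (fun v : {x // x ∈ P} => (v : Fin M → ℂ)) with hΦ₁def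
    set Φ₂ : ({x // x ∈ O} → ℂ) →ₗ[ℂ] (Fin M → ℂ) :=
      Fintype.linearCombination ℂ (fun v : {x // x ∈ O} => (v : Fin M → ℂ)) with hΦ₂def
    have hcolsum : ∀ l, ∑ v ∈ Finset.univ.image a, σ v l • v = Yᵀ l := by
      intro l
      rw [Finset.sum_image (f := fun v => σ v l • v) (fun x _ y _ h => hainj h)]
      funext i
      rw [hY]
      simp only [Finset.sum_apply, Pi.smul_apply, smul_eq_mul, Matrix.transpose_apply,
        Matrix.sum_apply, vecMulVec_apply, hσa]
      exact Finset.sum_congr rfl fun k _ => mul_comm _ _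
    have hcolY : ∀ l, Yᵀ l = Φ₁ (ρ (colW l)) + Φ₂ (fun v : {x // x ∈ O} => σ v.1 l) := by
      intro l
      have h1 : Φ₁ (ρ (colW l)) = ∑ v ∈ P, w v l • v := by
        rw [hΦ₁def, Fintype.linearCombination_apply]
        exact Finset.sum_coe_sort P (fun v => w v l • (v : Fin M → ℂ))
      have h2 : Φ₂ (fun v : {x // x ∈ O} => σ v.1 l) = ∑ v ∈ O, σ v l • v := by
        rw [hΦ₂def, Fintype.linearCombination_apply]
        exact Finset.sum_coe_sort O (fun v => σ v l • (v : Fin M → ℂ))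
      have h3 : ∀ v ∈ P, σ v l • v = w v l • v := by
        intro v hv
        rw [hPdef, Finset.mem_sdiff] at hv
        have hτz : τ v = 0 := hτ0 _ (by simpa [mem_image_univ_iff_mem_range] using hv.2)
        rw [hwdef]
        simp [hτz]
      calc Yᵀ l = ∑ v ∈ Finset.univ.image a, σ v l • v := (hcolsum l).symm
        _ = ∑ v ∈ P ∪ O, σ v l • v := by rw [hPdef, hOdef, Finset.sdiff_union_inter]
        _ = ∑ v ∈ P, σ v l • v + ∑ v ∈ O, σ v l • v :=
            Finset.sum_union (Finset.disjoint_sdiff_inter _ _)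
        _ = ∑ v ∈ P, w v l • v + ∑ v ∈ O, σ v l • v := by rw [Finset.sum_congr rfl h3]
        _ = _ := by rw [h1, h2]
    have hYle : Matrix.rank Y ≤ rW + O.card := by
      have hsub : span ℂ (Set.range Yᵀ) ≤
          (Submodule.map Φ₁ (Submodule.map ρ Wcol)) ⊔ LinearMap.range Φ₂ := by
        rw [span_le]
        rintro _ ⟨l, rfl⟩
        rw [SetLike.mem_coe, hcolY l]
        refine Submodule.add_mem _ (Submodule.mem_sup_left ?_) (Submodule.mem_sup_right ?_)
        · exact Submodule.mem_map_of_mem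
            (Submodule.mem_map_of_mem (subset_span (Set.mem_range_self l)))
        · exact LinearMap.mem_range_self _ _
      have e1 : Matrix.rank Y = finrank ℂ (span ℂ (Set.range Yᵀ)) :=
        Matrix.rank_eq_finrank_span_cols Y
      have e2 := Submodule.finrank_mono hsub
      have e3 := Submodule.finrank_add_le_finrank_add_finrank
        (Submodule.map Φ₁ (Submodule.map ρ Wcol)) (LinearMap.range Φ₂)
      have e4 : finrank ℂ (Submodule.map Φ₁ (Submodule.map ρ Wcol)) ≤ rW :=
        le_trans (Submodule.finrank_map_le _ _) (Submodule.finrank_map_le _ _)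
      have e5 : finrank ℂ (LinearMap.range Φ₂) ≤ O.card := by
        have h := LinearMap.finrank_range_le Φ₂
        rwa [Module.finrank_fintype_fun_eq_card, Fintype.card_coe] at h
      omega
    have hcards : S.card + O.card ≤ K + K' := by
      have h𝒞card : 𝒞.card + O.card = K + K' := by
        rw [h𝒞def, hOdef, Finset.card_union_add_card_inter,
          Finset.card_image_of_injective _ hainj, Finset.card_image_of_injective _ hbinj]
        simp
      have := Finset.card_le_card hS𝒞
      omega
    have hfinal : spark 𝒜 - 1 + (Y.rank : ℕ∞) ≤ ((2 * K : ℕ) : ℕ∞) := by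
      have hsub1 : spark 𝒜 - 1 ≤ (rC : ℕ∞) := by
        rw [tsub_le_iff_right]
        calc spark 𝒜 ≤ ((rC + 1 : ℕ) : ℕ∞) := hsparkle
          _ = (rC : ℕ∞) + 1 := by push_cast; rfl
      calc spark 𝒜 - 1 + (Y.rank : ℕ∞) ≤ (rC : ℕ∞) + (Y.rank : ℕ∞) :=
            add_le_add_left hsub1 _
        _ = ((rC + Y.rank : ℕ) : ℕ∞) := by push_cast; rfl
        _ ≤ ((2 * K : ℕ) : ℕ∞) := by
            apply Nat.cast_le.mpr
            omega
    exact absurd hcond hfinal.not_gt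
end

section
/- Let A ∈ ℂ^{M×n}, let K ≥ 1, let x₀ ∈ ℂ^n satisfy ‖x₀‖_0 ≤ K, and set y = A x₀. If δ_{2K}(A) < √2 − 1, then x₀ is the unique minimizer of ‖x‖_0 over {x ∈ ℂ^n : Ax = y} and also the unique minimizer of ‖x‖_1 over {x ∈ ℂ^n : Ax = y}. -/
open Matrix

/-- The ℓ0 "norm" of a vector: the number of its nonzero entries. -/
noncomputable def l0 {n : ℕ} (x : Fin n → ℂ) : ℕ := {j : Fin n | x j ≠ 0}.ncard

/-- The ℓ1 norm of a complex vector. -/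
noncomputable def l1 {n : ℕ} (x : Fin n → ℂ) : ℝ := ∑ j, ‖x j‖

/-- The `K`-restricted isometry constant of `A`: the smallest `δ ≥ 0` such that
`(1−δ)‖v‖² ≤ ‖Av‖² ≤ (1+δ)‖v‖²` for all `K`-sparse `v`. -/
noncomputable def RIC {M n : ℕ} (A : Matrix (Fin M) (Fin n) ℂ) (K : ℕ) : ℝ :=
  sInf {δ : ℝ | 0 ≤ δ ∧ ∀ v : Fin n → ℂ, l0 v ≤ K →
    (1 - δ) * (∑ j, Complex.normSq (v j)) ≤ (∑ i, Complex.normSq (A.mulVec v i)) ∧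
    (∑ i, Complex.normSq (A.mulVec v i)) ≤ (1 + δ) * (∑ j, Complex.normSq (v j))}

namespace CSaux

noncomputable def nsq {n : ℕ} (v : Fin n → ℂ) : ℝ := ∑ j, Complex.normSq (v j)

lemma nsq_nonneg {n : ℕ} (v : Fin n → ℂ) : 0 ≤ nsq v :=
  Finset.sum_nonneg fun _ _ => Complex.normSq_nonneg _

lemma eq_zero_of_nsq_le {n : ℕ} {v : Fin n → ℂ} (h : nsq v ≤ 0) : ∀ i, v i = 0 := by
  intro i
  have h1 : ∀ j ∈ Finset.univ, (0:ℝ) ≤ Complex.normSq (v j) := fun j _ => Complex.normSq_nonneg _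
  have h2 : nsq v = 0 := le_antisymm h (nsq_nonneg v)
  have := (Finset.sum_eq_zero_iff_of_nonneg h1).1 h2 i (Finset.mem_univ i)
  exact Complex.normSq_eq_zero.1 this

lemma l0_eq_card {n : ℕ} (v : Fin n → ℂ) :
    l0 v = (Finset.univ.filter (fun j => v j ≠ 0)).card := by
  rw [l0, Set.ncard_eq_toFinset_card']
  congr 1
  ext j
  simp

lemma l0_mono {n : ℕ} {v w : Fin n → ℂ} (h : ∀ i, v i ≠ 0 → w i ≠ 0) : l0 v ≤ l0 w := by
  rw [l0, l0]
  exact Set.ncard_le_ncard (fun i hi => h i hi) (Set.toFinite _)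

lemma l0_sub_le {n : ℕ} (a b : Fin n → ℂ) : l0 (a - b) ≤ l0 a + l0 b := by
  rw [l0, l0, l0]
  refine le_trans (Set.ncard_le_ncard (t := {j | a j ≠ 0} ∪ {j | b j ≠ 0}) ?_ (Set.toFinite _))
    (Set.ncard_union_le _ _)
  intro i hi
  by_contra hc
  simp only [Set.mem_union, Set.mem_setOf_eq, not_or, not_not] at hc
  simp only [Set.mem_setOf_eq, Pi.sub_apply, hc.1, hc.2, sub_zero, ne_eq, not_true] at hi

lemma l1_sq_le {n K : ℕ} {v : Fin n → ℂ} (hv : l0 v ≤ K) : l1 v ^ 2 ≤ K * nsq v := by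
  classical
  have h1 : l1 v = ∑ j ∈ Finset.univ.filter (fun j => v j ≠ 0), ‖v j‖ := by
    rw [l1]
    refine (Finset.sum_filter_of_ne ?_).symm
    intro j _ hj
    intro h0; rw [h0] at hj; simp at hj
  have hcs := Finset.sum_mul_sq_le_sq_mul_sq (Finset.univ.filter (fun j => v j ≠ 0))
      (fun _ => (1:ℝ)) (fun j => ‖v j‖)
  simp only [one_mul, one_pow, Finset.sum_const, nsmul_eq_mul, mul_one] at hcs
  have h2 : ∑ j ∈ Finset.univ.filter (fun j => v j ≠ 0), (‖v j‖)^2 ≤ nsq v := by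
    rw [nsq]
    have he : ∑ j ∈ Finset.univ.filter (fun j => v j ≠ 0), (‖v j‖)^2
        = ∑ j ∈ Finset.univ.filter (fun j => v j ≠ 0), Complex.normSq (v j) :=
      Finset.sum_congr rfl fun j _ => Complex.sq_norm _
    rw [he]
    exact Finset.sum_le_sum_of_subset_of_nonneg (Finset.subset_univ _)
      (fun j _ _ => Complex.normSq_nonneg _)
  calc l1 v ^ 2 ≤ ((Finset.univ.filter (fun j => v j ≠ 0)).card : ℝ) *
        ∑ j ∈ Finset.univ.filter (fun j => v j ≠ 0), (‖v j‖)^2 := by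
        rw [h1]; exact hcs
    _ ≤ K * nsq v := by
        refine mul_le_mul ?_ h2 (Finset.sum_nonneg fun j _ => sq_nonneg _) (Nat.cast_nonneg _)
        rw [← l0_eq_card] at *
        exact_mod_cast hv


/-- Q A v = ‖Av‖² -/
noncomputable def Q {M n : ℕ} (A : Matrix (Fin M) (Fin n) ℂ) (v : Fin n → ℂ) : ℝ :=
  ∑ i, Complex.normSq (A.mulVec v i)

/-- real inner product of Aa and Ab -/
noncomputable def R {M n : ℕ} (A : Matrix (Fin M) (Fin n) ℂ) (a b : Fin n → ℂ) : ℝ :=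
  ∑ i, (star (A.mulVec a i) * A.mulVec b i).re

lemma normSq_add_smul (z w : ℂ) (t : ℝ) :
    Complex.normSq (z + t * w) =
      Complex.normSq z + t^2 * Complex.normSq w + 2 * t * (star z * w).re := by
  simp [Complex.normSq_apply, Complex.mul_re, Complex.add_re, Complex.add_im,
    Complex.mul_im, Complex.ofReal_re, Complex.ofReal_im]
  ring

lemma Q_add_smul {M n : ℕ} (A : Matrix (Fin M) (Fin n) ℂ) (a b : Fin n → ℂ) (t : ℝ) :
    Q A (a + (t:ℂ) • b) = Q A a + t^2 * Q A b + 2 * t * R A a b := by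
  have hmv : A.mulVec (a + (t:ℂ) • b) = A.mulVec a + (t:ℂ) • A.mulVec b := by
    rw [Matrix.mulVec_add, Matrix.mulVec_smul]
  rw [Q, Q, Q, R]
  simp only [hmv, Pi.add_apply, Pi.smul_apply, smul_eq_mul]
  rw [Finset.mul_sum, Finset.mul_sum, ← Finset.sum_add_distrib, ← Finset.sum_add_distrib]
  exact Finset.sum_congr rfl fun i _ => normSq_add_smul _ _ _

lemma R_self {M n : ℕ} (A : Matrix (Fin M) (Fin n) ℂ) (a : Fin n → ℂ) : R A a a = Q A a := by
  rw [R, Q]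
  refine Finset.sum_congr rfl fun i _ => ?_
  simp [Complex.mul_re, Complex.normSq_apply]

lemma R_sum {M n : ℕ} (A : Matrix (Fin M) (Fin n) ℂ) (a : Fin n → ℂ) {ι : Type*}
    (s : Finset ι) (f : ι → Fin n → ℂ) :
    R A a (∑ j ∈ s, f j) = ∑ j ∈ s, R A a (f j) := by
  have hmv : A.mulVec (∑ j ∈ s, f j) = ∑ j ∈ s, A.mulVec (f j) := by
    rw [show A.mulVec = (Matrix.mulVecLin A : (Fin n → ℂ) → (Fin M → ℂ)) from rfl]
    exact map_sum (Matrix.mulVecLin A) f s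
  rw [R]
  simp only [hmv, Finset.sum_apply]
  have : ∀ i : Fin M, (star ((A *ᵥ a) i) * ∑ c ∈ s, (A *ᵥ f c) i).re
      = ∑ c ∈ s, (star ((A *ᵥ a) i) * (A *ᵥ f c) i).re := by
    intro i
    rw [Finset.mul_sum, Complex.re_sum]
  simp only [this]
  rw [Finset.sum_comm]
  rfl

lemma Q_nonneg {M n : ℕ} (A : Matrix (Fin M) (Fin n) ℂ) (v : Fin n → ℂ) : 0 ≤ Q A v :=
  Finset.sum_nonneg fun _ _ => Complex.normSq_nonneg _

lemma l0_add_smul_le {n K : ℕ} {a b : Fin n → ℂ} (ha : l0 a ≤ K) (hb : l0 b ≤ K) (c : ℂ) :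
    l0 (a + c • b) ≤ 2 * K := by
  have hneg : l0 (-(c • b)) = l0 (c • b) := by
    unfold l0; congr 1; ext j; simp
  have h1 : l0 (a + c • b) ≤ l0 a + l0 (c • b) := by
    have := l0_sub_le a (-(c • b))
    rw [hneg] at this
    simpa [sub_neg_eq_add] using this
  have h2 : l0 (c • b) ≤ l0 b := l0_mono fun i hi => by
    intro h0; rw [Pi.smul_apply, h0, smul_zero] at hi; exact hi rfl
  omega

lemma RO {M n K : ℕ} {A : Matrix (Fin M) (Fin n) ℂ} {δ : ℝ} (hδ0 : 0 ≤ δ)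
    (hRIP : ∀ v : Fin n → ℂ, l0 v ≤ 2*K → (1-δ)*nsq v ≤ Q A v ∧ Q A v ≤ (1+δ)*nsq v)
    {a b : Fin n → ℂ} (ha : l0 a ≤ K) (hb : l0 b ≤ K)
    (hdisj : ∀ i, a i = 0 ∨ b i = 0) :
    |R A a b| ≤ δ * Real.sqrt (nsq a) * Real.sqrt (nsq b) := by
  have hnsq : ∀ t : ℝ, nsq (a + (t:ℂ) • b) = nsq a + t^2 * nsq b := by
    intro t
    rw [nsq, nsq, nsq, Finset.mul_sum, ← Finset.sum_add_distrib]
    refine Finset.sum_congr rfl fun i _ => ?_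
    rcases hdisj i with h | h <;>
      simp [h, Complex.normSq_mul, Complex.normSq_ofReal, pow_two] <;> ring
  have key : ∀ t : ℝ, 2*t*R A a b ≤ δ * (nsq a + t^2 * nsq b) := by
    intro t
    have h1 := (hRIP (a + (t:ℂ) • b) (l0_add_smul_le ha hb _)).2
    have h2 := (hRIP (a + ((-t : ℝ):ℂ) • b) (l0_add_smul_le ha hb _)).1
    rw [Q_add_smul, hnsq] at h1
    rw [Q_add_smul, hnsq] at h2
    nlinarith [h1, h2]
  by_cases hb0 : nsq b ≤ 0
  · have hbz : b = 0 := funext (eq_zero_of_nsq_le hb0)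
    have hR : R A a b = 0 := by simp [R, hbz]
    rw [hR, abs_zero]
    positivity
  push_neg at hb0
  by_cases ha0 : nsq a ≤ 0
  · have haz : a = 0 := funext (eq_zero_of_nsq_le ha0)
    have hR : R A a b = 0 := by simp [R, haz]
    rw [hR, abs_zero]
    positivity
  push_neg at ha0
  set α := Real.sqrt (nsq a) with hαdef
  set β := Real.sqrt (nsq b) with hβdef
  have hα : 0 < α := Real.sqrt_pos.2 ha0
  have hβ : 0 < β := Real.sqrt_pos.2 hb0
  have hα2 : α^2 = nsq a := Real.sq_sqrt ha0.le
  have hβ2 : β^2 = nsq b := Real.sq_sqrt hb0.le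
  have ht2 : nsq a + (α/β)^2 * nsq b = 2*α^2 := by
    rw [div_pow, ← hβ2, ← hα2]; field_simp; ring
  have k1 := key (α/β)
  have k2 := key (-(α/β))
  rw [ht2] at k1
  have ht2' : nsq a + (-(α/β))^2 * nsq b = 2*α^2 := by rw [neg_pow, ← ht2]; ring_nf
  rw [ht2'] at k2
  have k1' := mul_le_mul_of_nonneg_right k1 hβ.le
  have k2' := mul_le_mul_of_nonneg_right k2 hβ.le
  have e1 : (2*(α/β)*R A a b)*β = 2*α*R A a b := by field_simp
  have e2 : (2*(-(α/β))*R A a b)*β = -(2*α*R A a b) := by field_simp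
  rw [e1] at k1'
  rw [e2] at k2'
  rw [abs_le]
  constructor
  · nlinarith [k2', hα, hβ]
  · nlinarith [k1', hα, hβ]

lemma exists_delta {M n : ℕ} (A : Matrix (Fin M) (Fin n) ℂ) (K' : ℕ) (c : ℝ)
    (h : RIC A K' < c) :
    ∃ δ : ℝ, 0 ≤ δ ∧ δ < c ∧ ∀ v : Fin n → ℂ, l0 v ≤ K' →
      (1-δ)*nsq v ≤ Q A v ∧ Q A v ≤ (1+δ)*nsq v := by
  set S := {δ : ℝ | 0 ≤ δ ∧ ∀ v : Fin n → ℂ, l0 v ≤ K' →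
    (1 - δ) * (∑ j, Complex.normSq (v j)) ≤ (∑ i, Complex.normSq (A.mulVec v i)) ∧
    (∑ i, Complex.normSq (A.mulVec v i)) ≤ (1 + δ) * (∑ j, Complex.normSq (v j))} with hS
  have hne : S.Nonempty := by
    set Δ : ℝ := ∑ i, ∑ j, Complex.normSq (A i j) with hΔ
    have hΔ0 : 0 ≤ Δ := Finset.sum_nonneg fun i _ => Finset.sum_nonneg fun j _ =>
      Complex.normSq_nonneg _
    refine ⟨max 1 Δ, le_trans zero_le_one (le_max_left _ _), fun v _ => ?_⟩
    have hQΔ : (∑ i, Complex.normSq (A.mulVec v i)) ≤ Δ * (∑ j, Complex.normSq (v j)) := by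
      rw [hΔ, Finset.sum_mul]
      refine Finset.sum_le_sum fun i _ => ?_
      have h1 : ‖A.mulVec v i‖ ≤ ∑ j, ‖A i j‖ * ‖v j‖ := by
        rw [Matrix.mulVec, dotProduct]
        calc ‖∑ j, A i j * v j‖ = ‖∑ j, A i j * v j‖ := rfl
          _ ≤ ∑ j, ‖A i j * v j‖ := norm_sum_le _ _
          _ = ∑ j, ‖A i j‖ * ‖v j‖ :=
              Finset.sum_congr rfl fun j _ => by rw [norm_mul]
      have h2 := Finset.sum_mul_sq_le_sq_mul_sq Finset.univ
        (fun j => ‖A i j‖) (fun j => ‖v j‖)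
      have h3 : Complex.normSq (A.mulVec v i)
          ≤ (∑ j, ‖A i j‖ * ‖v j‖)^2 := by
        rw [← Complex.sq_norm]
        exact pow_le_pow_left₀ (norm_nonneg _) h1 2
      refine le_trans h3 (le_trans h2 (le_of_eq ?_))
      congr 1 <;> exact Finset.sum_congr rfl fun j _ => Complex.sq_norm _
    constructor
    · have h1 : 1 - max 1 Δ ≤ 0 := by simp [le_max_left]
      have := mul_nonpos_of_nonpos_of_nonneg h1
        (Finset.sum_nonneg fun j (_ : j ∈ Finset.univ) => Complex.normSq_nonneg (v j))
      exact le_trans this (Finset.sum_nonneg fun i _ => Complex.normSq_nonneg _)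
    · refine le_trans hQΔ (mul_le_mul_of_nonneg_right ?_
        (Finset.sum_nonneg fun j _ => Complex.normSq_nonneg _))
      have := le_max_right (1:ℝ) Δ
      linarith
  obtain ⟨δ, hδS, hδc⟩ := exists_lt_of_csInf_lt hne h
  exact ⟨δ, hδS.1, hδc, fun v hv => hδS.2 v hv⟩
lemma R_sub_right {M n : ℕ} (A : Matrix (Fin M) (Fin n) ℂ) (a b c : Fin n → ℂ) :
    R A a (b - c) = R A a b - R A a c := by
  have hmv : A.mulVec (b - c) = A.mulVec b - A.mulVec c := by
    rw [Matrix.mulVec_sub]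
  simp only [R, hmv, Pi.sub_apply, mul_sub, Complex.sub_re]
  rw [Finset.sum_sub_distrib]

lemma R_add_left {M n : ℕ} (A : Matrix (Fin M) (Fin n) ℂ) (a b c : Fin n → ℂ) :
    R A (a + b) c = R A a c + R A b c := by
  have hmv : A.mulVec (a + b) = A.mulVec a + A.mulVec b := by
    rw [Matrix.mulVec_add]
  simp only [R, hmv, Pi.add_apply, star_add, add_mul, Complex.add_re]
  rw [Finset.sum_add_distrib]

lemma l1_nonneg {n : ℕ} (v : Fin n → ℂ) : 0 ≤ l1 v :=
  Finset.sum_nonneg fun _ _ => norm_nonneg _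

set_option maxHeartbeats 2000000 in
lemma l1_unique {M n K : ℕ} {A : Matrix (Fin M) (Fin n) ℂ} {δ : ℝ}
    (hK : 1 ≤ K) (hδ0 : 0 ≤ δ) (hδlt : δ < Real.sqrt 2 - 1)
    (hRIP : ∀ v : Fin n → ℂ, l0 v ≤ 2*K → (1-δ)*nsq v ≤ Q A v ∧ Q A v ≤ (1+δ)*nsq v)
    {x₀ x : Fin n → ℂ} (hx₀ : l0 x₀ ≤ K)
    (hAx : A.mulVec x = A.mulVec x₀) (hne : x ≠ x₀) (hl1 : l1 x ≤ l1 x₀) : False := by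
  classical
  have hK0 : 0 < K := hK
  set h : Fin n → ℂ := x - x₀ with hh
  have hAh : A.mulVec h = 0 := by
    rw [hh, Matrix.mulVec_sub, hAx, sub_self]
  set h₀ : Fin n → ℂ := fun i => if x₀ i ≠ 0 then h i else 0 with hh₀
  set g : Fin n → ℂ := fun i => if x₀ i ≠ 0 then 0 else h i with hg
  have hsplit : ∀ i, h i = h₀ i + g i := by
    intro i; by_cases hp : x₀ i = 0 <;> simp [hh₀, hg, hp]
  have hl0h₀ : l0 h₀ ≤ K := by
    refine le_trans (l0_mono (v := h₀) (w := x₀) ?_) hx₀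
    intro i hi
    by_contra hc
    simp [hh₀, hc] at hi
  -- cone condition
  have hcone : l1 g ≤ l1 h₀ := by
    have hpt : ∀ i, ‖x₀ i‖ - ‖h₀ i‖ + ‖g i‖
        ≤ ‖x i‖ := by
      intro i
      have hx_i : x i = x₀ i + h i := by simp [hh]
      by_cases hp : x₀ i = 0
      · simp [hh₀, hg, hp, hx_i]
      · have e : h₀ i = h i := by simp [hh₀, hp]
        have e2 : g i = 0 := by simp [hg, hp]
        rw [e, e2, hx_i]
        have htri : ‖x₀ i‖ ≤ ‖x₀ i + h i‖ + ‖h i‖ := by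
          calc ‖x₀ i‖ = ‖(x₀ i + h i) + (-(h i))‖ := by
                rw [add_neg_cancel_right]
            _ ≤ ‖x₀ i + h i‖ + ‖-(h i)‖ := norm_add_le _ _
            _ = ‖x₀ i + h i‖ + ‖h i‖ := by rw [norm_neg]
        rw [norm_zero]
        linarith [norm_nonneg (h i)]
    have hsum := Finset.sum_le_sum fun i (_ : i ∈ Finset.univ) => hpt i
    rw [Finset.sum_add_distrib, Finset.sum_sub_distrib] at hsum
    have e0 : ∑ i, ‖x₀ i‖ = l1 x₀ := rfl
    have e1 : ∑ i, ‖h₀ i‖ = l1 h₀ := rfl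
    have e2 : ∑ i, ‖g i‖ = l1 g := rfl
    have e3 : ∑ i, ‖x i‖ = l1 x := rfl
    rw [e0, e1, e2, e3] at hsum
    linarith
  -- n ≥ 1
  have hn : 1 ≤ n := by
    rcases Nat.eq_zero_or_pos n with h0 | hpos
    · exact absurd (funext fun i => absurd i.isLt (by omega)) hne
    · exact hpos
  -- sorting
  set f : Fin n → ℝ := fun i => -‖g i‖ with hf
  set σ : Equiv.Perm (Fin n) := Tuple.sort f with hσ
  have hanti : ∀ {m m' : Fin n}, m ≤ m' → ‖g (σ m')‖ ≤ ‖g (σ m)‖ := by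
    intro m m' hmm
    have := Tuple.monotone_sort f hmm
    simp only [Function.comp_apply, hf, ← hσ] at this
    linarith
  -- blocks
  set v : ℕ → Fin n → ℂ := fun j i => if ((σ.symm i : ℕ) / K = j) then g i else 0 with hv
  set B : ℕ → Finset (Fin n) := fun j => Finset.univ.filter (fun m : Fin n => (m:ℕ)/K = j)
    with hB
  have hvσ : ∀ (j : ℕ) (m : Fin n), v j (σ m) = if ((m:ℕ)/K = j) then g (σ m) else 0 := by
    intro j m
    simp [hv, Equiv.symm_apply_apply]
  -- division facts
  have d1 : ∀ {m t : ℕ}, m / K = t → t*K ≤ m := by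
    intro m t ht
    exact (Nat.le_div_iff_mul_le hK0).1 (le_of_eq ht.symm)
  have d2 : ∀ {m t : ℕ}, m / K = t → m < (t+1)*K := by
    intro m t ht
    exact (Nat.div_lt_iff_lt_mul hK0).1 (by omega)
  have d3 : ∀ {m t : ℕ}, t*K ≤ m → m < (t+1)*K → m/K = t := by
    intro m t h1 h2
    have := (Nat.le_div_iff_mul_le hK0).2 h1
    have := (Nat.div_lt_iff_lt_mul hK0).2 h2
    omega
  have hBcard : ∀ j, (B j).card ≤ K := by
    intro j
    have himg : (B j).card = ((B j).image (fun m : Fin n => (m:ℕ))).card :=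
      (Finset.card_image_of_injective _ Fin.val_injective).symm
    have hsub : (B j).image (fun m : Fin n => (m:ℕ)) ⊆ Finset.Ico (j*K) (j*K+K) := by
      intro t ht
      simp only [Finset.mem_image] at ht
      obtain ⟨m, hm, rfl⟩ := ht
      have hmj : (m:ℕ)/K = j := by simpa [hB] using hm
      have hd1 := d1 hmj
      have hd2 := d2 hmj
      have he : (j+1)*K = j*K + K := by ring
      exact Finset.mem_Ico.2 ⟨hd1, by omega⟩
    calc (B j).card = _ := himg
      _ ≤ (Finset.Ico (j*K) (j*K+K)).card := Finset.card_le_card hsub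
      _ = K := by rw [Nat.card_Ico]; omega
  have hl0v : ∀ j, l0 (v j) ≤ K := by
    intro j
    rw [l0]
    refine le_trans (Set.ncard_le_ncard (t := (σ '' (B j : Set (Fin n)))) ?_ (Set.toFinite _))
      (le_trans (Set.ncard_image_le (Set.toFinite _)) ?_)
    · intro i hi
      simp only [Set.mem_setOf_eq, hv] at hi
      by_cases hc : ((σ.symm i : ℕ) / K = j)
      · exact ⟨σ.symm i, by simp [hB, hc], by simp⟩
      · simp [hc] at hi
    · rw [Set.ncard_coe_finset]; exact hBcard j
  have hnsqv : ∀ j, nsq (v j) = ∑ m ∈ B j, Complex.normSq (g (σ m)) := by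
    intro j
    rw [nsq, ← Equiv.sum_comp σ (fun i => Complex.normSq (v j i))]
    rw [hB, Finset.sum_filter]
    refine Finset.sum_congr rfl fun m _ => ?_
    rw [hvσ]
    by_cases hc : ((m:ℕ)/K = j) <;> simp [hc]
  have hl1v : ∀ j, l1 (v j) = ∑ m ∈ B j, ‖g (σ m)‖ := by
    intro j
    rw [l1, ← Equiv.sum_comp σ (fun i => ‖v j i‖)]
    rw [hB, Finset.sum_filter]
    refine Finset.sum_congr rfl fun m _ => ?_
    rw [hvσ]
    by_cases hc : ((m:ℕ)/K = j) <;> simp [hc]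
  have hsumv : ∀ i, (∑ j ∈ Finset.range n, v j i) = g i := by
    intro i
    rw [show (∑ j ∈ Finset.range n, v j i)
        = ∑ j ∈ Finset.range n, if ((σ.symm i : ℕ) / K = j) then g i else 0 from rfl]
    rw [Finset.sum_ite_eq]
    rw [if_pos]
    exact Finset.mem_range.2 (lt_of_le_of_lt (Nat.div_le_self _ _) (σ.symm i).isLt)
  have hl1g : (∑ j ∈ Finset.range n, l1 (v j)) = l1 g := by
    have hpt : ∀ i, (∑ j ∈ Finset.range n, ‖v j i‖) = ‖g i‖ := by
      intro i
      rw [show (∑ j ∈ Finset.range n, ‖v j i‖)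
          = ∑ j ∈ Finset.range n, if ((σ.symm i : ℕ) / K = j) then ‖g i‖ else 0 by
        refine Finset.sum_congr rfl fun j _ => ?_
        rw [show v j i = if ((σ.symm i : ℕ) / K = j) then g i else 0 from rfl]
        by_cases hc : ((σ.symm i : ℕ)/K = j) <;> simp [hc]]
      rw [Finset.sum_ite_eq, if_pos]
      exact Finset.mem_range.2 (lt_of_le_of_lt (Nat.div_le_self _ _) (σ.symm i).isLt)
    rw [show (∑ j ∈ Finset.range n, l1 (v j)) = ∑ j ∈ Finset.range n, ∑ i, ‖v j i‖
      from rfl]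
    rw [Finset.sum_comm, l1]
    exact Finset.sum_congr rfl fun i _ => hpt i
  -- key block inequality
  have hblock : ∀ j : ℕ, 1 ≤ j → (K:ℝ) * nsq (v j) ≤ (l1 (v (j-1)))^2 := by
    intro j hj
    by_cases hBj : (B j).Nonempty
    · obtain ⟨m₁, hm₁⟩ := hBj
      have hm₁j : (m₁:ℕ)/K = j := by simpa [hB] using hm₁
      have hjK : j*K ≤ (m₁:ℕ) := d1 hm₁j
      have hjKn : j*K - 1 < n := by have := m₁.isLt; omega
      set m₀ : Fin n := ⟨j*K - 1, hjKn⟩ with hm₀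
      set c := ‖g (σ m₀)‖ with hc
      have hc0 : 0 ≤ c := norm_nonneg _
      have hjK1 : K ≤ j*K := by
        calc K = 1*K := (one_mul K).symm
          _ ≤ j*K := Nat.mul_le_mul_right K hj
      have hub : ∀ m ∈ B j, ‖g (σ m)‖ ≤ c := by
        intro m hm
        have hmj : (m:ℕ)/K = j := by simpa [hB] using hm
        have := d1 hmj
        exact hanti (show m₀ ≤ m by rw [Fin.le_def]; simp only [hm₀]; omega)
      have hlb : ∀ m ∈ B (j-1), c ≤ ‖g (σ m)‖ := by
        intro m hm
        have hmj : (m:ℕ)/K = j-1 := by simpa [hB] using hm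
        have hd2 := d2 hmj
        have he : (j-1+1) = j := by omega
        rw [he] at hd2
        exact hanti (show m ≤ m₀ by rw [Fin.le_def]; simp only [hm₀]; omega)
      have hcard : (B (j-1)).card = K := by
        have hbij : (B (j-1)).image (fun m : Fin n => (m:ℕ))
            = Finset.Ico ((j-1)*K) (j*K) := by
          ext t
          simp only [Finset.mem_image, Finset.mem_Ico]
          constructor
          · rintro ⟨m, hm, rfl⟩
            have hmj : (m:ℕ)/K = j-1 := by simpa [hB] using hm
            have hd1 := d1 hmj
            have hd2 := d2 hmj
            have he : (j-1+1)*K = j*K := by congr 1; omega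
            exact ⟨hd1, by omega⟩
          · rintro ⟨h1, h2⟩
            have htn : t < n := by have := m₁.isLt; omega
            refine ⟨⟨t, htn⟩, ?_, rfl⟩
            simp only [hB, Finset.mem_filter, Finset.mem_univ, true_and]
            refine d3 h1 ?_
            have he : (j-1+1)*K = j*K := by congr 1; omega
            omega
        have := Finset.card_image_of_injective (B (j-1)) Fin.val_injective
        rw [hbij] at this
        rw [← this, Nat.card_Ico]
        have he : (j-1)*K = j*K - K := by
          rw [Nat.sub_one_mul]
        omega
      have h1 : nsq (v j) ≤ (K:ℝ) * c^2 := by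
        rw [hnsqv]
        calc ∑ m ∈ B j, Complex.normSq (g (σ m)) ≤ ∑ m ∈ B j, c^2 := by
              refine Finset.sum_le_sum fun m hm => ?_
              rw [← Complex.sq_norm]
              exact pow_le_pow_left₀ (norm_nonneg _) (hub m hm) 2
          _ = (B j).card * c^2 := by rw [Finset.sum_const, nsmul_eq_mul]
          _ ≤ (K:ℝ) * c^2 := by
              refine mul_le_mul_of_nonneg_right ?_ (sq_nonneg c)
              exact_mod_cast hBcard j
      have h2 : (K:ℝ) * c ≤ l1 (v (j-1)) := by
        rw [hl1v]
        calc (K:ℝ) * c = (B (j-1)).card * c := by rw [hcard]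
          _ = ∑ _m ∈ B (j-1), c := by rw [Finset.sum_const, nsmul_eq_mul]
          _ ≤ ∑ m ∈ B (j-1), ‖g (σ m)‖ := Finset.sum_le_sum hlb
      have hK0' : (0:ℝ) < K := by exact_mod_cast hK0
      nlinarith [mul_le_mul_of_nonneg_left h1 hK0'.le,
        pow_le_pow_left₀ (by positivity : (0:ℝ) ≤ (K:ℝ)*c) h2 2]
    · have hz : nsq (v j) = 0 := by
        rw [hnsqv, Finset.not_nonempty_iff_eq_empty.1 hBj, Finset.sum_empty]
      rw [hz, mul_zero]
      exact sq_nonneg _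
  -- tail bound
  have hsK : (0:ℝ) < Real.sqrt K := Real.sqrt_pos.2 (by exact_mod_cast hK0)
  have hsqrtblock : ∀ j : ℕ, 1 ≤ j →
      Real.sqrt K * Real.sqrt (nsq (v j)) ≤ l1 (v (j-1)) := by
    intro j hj
    have h1 : Real.sqrt ((K:ℝ) * nsq (v j)) ≤ Real.sqrt ((l1 (v (j-1)))^2) :=
      Real.sqrt_le_sqrt (hblock j hj)
    rw [Real.sqrt_mul (by positivity) _, Real.sqrt_sq (l1_nonneg _)] at h1
    exact h1
  set S := ∑ j ∈ Finset.Ico 1 n, Real.sqrt (nsq (v j)) with hS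
  have hS0 : 0 ≤ S := Finset.sum_nonneg fun j _ => Real.sqrt_nonneg _
  have htail : Real.sqrt K * S ≤ l1 g := by
    rw [hS, Finset.mul_sum]
    calc ∑ j ∈ Finset.Ico 1 n, Real.sqrt K * Real.sqrt (nsq (v j))
        ≤ ∑ j ∈ Finset.Ico 1 n, l1 (v (j-1)) :=
          Finset.sum_le_sum fun j hj => hsqrtblock j (Finset.mem_Ico.1 hj).1
      _ = ∑ j ∈ Finset.range (n-1), l1 (v (1+j-1)) := by rw [Finset.sum_Ico_eq_sum_range]
      _ = ∑ j ∈ Finset.range (n-1), l1 (v j) :=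
          Finset.sum_congr rfl fun j _ => by
            have he : 1+j-1 = j := by omega
            rw [he]
      _ ≤ ∑ j ∈ Finset.range n, l1 (v j) :=
          Finset.sum_le_sum_of_subset_of_nonneg (Finset.range_subset_range.2 (by omega))
            (fun j _ _ => l1_nonneg _)
      _ = l1 g := hl1g
  have hl1h₀ : l1 h₀ ≤ Real.sqrt K * Real.sqrt (nsq h₀) := by
    have h1 : Real.sqrt ((l1 h₀)^2) ≤ Real.sqrt ((K:ℝ) * nsq h₀) :=
      Real.sqrt_le_sqrt (l1_sq_le hl0h₀)
    rw [Real.sqrt_sq (l1_nonneg _), Real.sqrt_mul (by positivity)] at h1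
    exact h1
  set a := Real.sqrt (nsq h₀) with ha
  set b := Real.sqrt (nsq (v 0)) with hb
  have hSh₀ : S ≤ a := by
    have hms : Real.sqrt K * S ≤ Real.sqrt K * a :=
      le_trans htail (le_trans hcone hl1h₀)
    exact le_of_mul_le_mul_left hms hsK
  -- the vector u
  set u : Fin n → ℂ := fun i => h₀ i + v 0 i with hu
  have hdisj₀ : ∀ (j:ℕ), ∀ i, h₀ i = 0 ∨ v j i = 0 := by
    intro j i
    by_cases hp : x₀ i = 0
    · left; simp [hh₀, hp]
    · right
      show (if ((σ.symm i : ℕ)/K = j) then g i else 0) = 0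
      have hgi : g i = 0 := by simp [hg, hp]
      rw [hgi, ite_self]
  have hdisjv : ∀ (j:ℕ), 1 ≤ j → ∀ i, v 0 i = 0 ∨ v j i = 0 := by
    intro j hj i
    by_cases hc : ((σ.symm i : ℕ)/K = 0)
    · right
      show (if ((σ.symm i : ℕ)/K = j) then g i else 0) = 0
      rw [if_neg (by omega)]
    · left
      show (if ((σ.symm i : ℕ)/K = 0) then g i else 0) = 0
      rw [if_neg hc]
  have hl0u : l0 u ≤ 2*K := by
    have h1 := l0_add_smul_le hl0h₀ (hl0v 0) 1
    have e : h₀ + (1:ℂ) • v 0 = u := funext fun i => by simp [hu]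
    rwa [e] at h1
  have hnsqu : nsq u = nsq h₀ + nsq (v 0) := by
    rw [nsq, nsq, nsq, ← Finset.sum_add_distrib]
    refine Finset.sum_congr rfl fun i _ => ?_
    rcases hdisj₀ 0 i with hz | hz <;> simp [hu, hz]
  have hQu : Q A u = -(∑ j ∈ Finset.Ico 1 n, R A u (v j)) := by
    have hhu : (h : Fin n → ℂ) = u + ∑ j ∈ Finset.Ico 1 n, v j := by
      funext i
      rw [Pi.add_apply, Finset.sum_apply]
      have hrange : Finset.range n = insert 0 (Finset.Ico 1 n) := by
        ext t; simp only [Finset.mem_Ico, Finset.mem_range, Finset.mem_insert]; omega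
      have hgi := hsumv i
      rw [hrange, Finset.sum_insert (by simp)] at hgi
      have hui : u i = h₀ i + v 0 i := rfl
      rw [hsplit i, ← hgi, hui]
      ring
    have hRuh : R A u h = 0 := by simp [R, hAh]
    have huh : u = h - ∑ j ∈ Finset.Ico 1 n, v j := by
      rw [hhu]; funext i; simp
    have hRsplit : R A u u = R A u h - R A u (∑ j ∈ Finset.Ico 1 n, v j) := by
      rw [← R_sub_right, ← huh]
    rw [← R_self, hRsplit, hRuh, R_sum, zero_sub]
  have hsplitR : ∀ j : ℕ, R A u (v j) = R A h₀ (v j) + R A (v 0) (v j) := by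
    intro j
    have e : (u : Fin n → ℂ) = h₀ + v 0 := funext fun i => rfl
    rw [e, R_add_left]
  have hQu_le : Q A u ≤ δ * (a + b) * S := by
    rw [hQu]
    have hstep : ∀ j ∈ Finset.Ico 1 n,
        -(R A u (v j)) ≤ δ*(a+b)*Real.sqrt (nsq (v j)) := by
      intro j hj
      have hj1 : 1 ≤ j := (Finset.mem_Ico.1 hj).1
      have hr1 := RO hδ0 hRIP hl0h₀ (hl0v j) (hdisj₀ j)
      have hr2 := RO hδ0 hRIP (hl0v 0) (hl0v j) (hdisjv j hj1)
      calc -(R A u (v j)) = -(R A h₀ (v j)) + -(R A (v 0) (v j)) := by rw [hsplitR]; ring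
        _ ≤ |R A h₀ (v j)| + |R A (v 0) (v j)| := add_le_add (neg_le_abs _) (neg_le_abs _)
        _ ≤ δ * a * Real.sqrt (nsq (v j)) + δ * b * Real.sqrt (nsq (v j)) :=
            add_le_add hr1 hr2
        _ = δ*(a+b)*Real.sqrt (nsq (v j)) := by ring
    calc -(∑ j ∈ Finset.Ico 1 n, R A u (v j))
        = ∑ j ∈ Finset.Ico 1 n, -(R A u (v j)) := by rw [← Finset.sum_neg_distrib]
      _ ≤ ∑ j ∈ Finset.Ico 1 n, δ*(a+b)*Real.sqrt (nsq (v j)) := Finset.sum_le_sum hstep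
      _ = δ*(a+b)*S := by rw [hS, Finset.mul_sum]
  -- contradiction chain
  set U := Real.sqrt (nsq u) with hUdef
  have hU0 : 0 ≤ U := Real.sqrt_nonneg _
  have hU2 : U^2 = nsq u := Real.sq_sqrt (nsq_nonneg u)
  have ha2 : a^2 = nsq h₀ := Real.sq_sqrt (nsq_nonneg h₀)
  have hb2 : b^2 = nsq (v 0) := Real.sq_sqrt (nsq_nonneg (v 0))
  have ha0 : 0 ≤ a := Real.sqrt_nonneg _
  have hb0 : 0 ≤ b := Real.sqrt_nonneg _
  have hs2 : Real.sqrt 2 ^ 2 = 2 := Real.sq_sqrt (by norm_num)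
  have hs20 : 0 ≤ Real.sqrt 2 := Real.sqrt_nonneg 2
  have hab : a + b ≤ Real.sqrt 2 * U := by
    have hsq : (a+b)^2 ≤ (Real.sqrt 2 * U)^2 := by
      have : (Real.sqrt 2 * U)^2 = 2 * nsq u := by
        rw [mul_pow, hs2, hU2]
      rw [this, hnsqu, ← ha2, ← hb2]
      nlinarith [sq_nonneg (a-b)]
    calc a + b = Real.sqrt ((a+b)^2) := (Real.sqrt_sq (by positivity)).symm
      _ ≤ Real.sqrt ((Real.sqrt 2 * U)^2) := Real.sqrt_le_sqrt hsq
      _ = Real.sqrt 2 * U := Real.sqrt_sq (by positivity)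
  have haU : a ≤ U := by
    refine Real.sqrt_le_sqrt ?_
    rw [hnsqu]
    nlinarith [nsq_nonneg (v 0)]
  have hfin : (1-δ) * U^2 ≤ Real.sqrt 2 * δ * U^2 := by
    have hc1 : (1-δ)*U^2 ≤ Q A u := by rw [hU2]; exact (hRIP u hl0u).1
    have hc2 : δ*(a+b)*S ≤ δ*(a+b)*a :=
      mul_le_mul_of_nonneg_left hSh₀ (by positivity)
    have hc3 : δ*(a+b)*a ≤ δ*(Real.sqrt 2 * U)*U := by
      have hm := mul_le_mul hab haU ha0 (mul_nonneg hs20 hU0)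
      have := mul_le_mul_of_nonneg_left hm hδ0
      calc δ*(a+b)*a = δ*((a+b)*a) := by ring
        _ ≤ δ*((Real.sqrt 2 * U)*U) := this
        _ = δ*(Real.sqrt 2 * U)*U := by ring
    calc (1-δ)*U^2 ≤ Q A u := hc1
      _ ≤ δ*(a+b)*S := hQu_le
      _ ≤ δ*(a+b)*a := hc2
      _ ≤ δ*(Real.sqrt 2 * U)*U := hc3
      _ = Real.sqrt 2 * δ * U^2 := by ring
  have hδ2 : Real.sqrt 2 * δ < 1 - δ := by nlinarith [hs2, hδlt, hδ0, hs20]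
  have hUz : nsq u ≤ 0 := by nlinarith [hfin, hU2, sq_nonneg U, hδ2]
  have huz := eq_zero_of_nsq_le hUz
  have hh₀z : ∀ i, h₀ i = 0 := by
    intro i
    rcases hdisj₀ 0 i with hz | hz
    · exact hz
    · have := huz i
      rw [show u i = h₀ i + v 0 i from rfl, hz, add_zero] at this
      exact this
  have hv0z : ∀ i, v 0 i = 0 := by
    intro i
    have := huz i
    rw [show u i = h₀ i + v 0 i from rfl, hh₀z i, zero_add] at this
    exact this
  have hgz : ∀ m : Fin n, g (σ m) = 0 := by
    intro m
    by_cases hm : (m:ℕ) < K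
    · have hd : (m:ℕ)/K = 0 := Nat.div_eq_of_lt hm
      have hvz := hv0z (σ m)
      rw [hvσ 0 m, if_pos hd] at hvz
      exact hvz
    · push_neg at hm
      have hKn : K - 1 < n := by have := m.isLt; omega
      set mK : Fin n := ⟨K-1, hKn⟩ with hmK
      have hgmK : g (σ mK) = 0 := by
        have hd : ((mK:ℕ))/K = 0 := Nat.div_eq_of_lt (by simp [hmK]; omega)
        have hvz := hv0z (σ mK)
        rw [hvσ 0 mK, if_pos hd] at hvz
        exact hvz
      have hle := hanti (show mK ≤ m by rw [Fin.le_def]; simp [hmK]; omega)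
      rw [hgmK, norm_zero] at hle
      exact norm_eq_zero.1 (le_antisymm hle (norm_nonneg _))
  have hgz' : ∀ i, g i = 0 := by
    intro i
    have := hgz (σ.symm i)
    rwa [Equiv.apply_symm_apply] at this
  refine hne (funext fun i => ?_)
  have hi := hsplit i
  rw [hh₀z i, hgz' i, add_zero] at hi
  exact sub_eq_zero.1 hi
end CSaux

open CSaux in
theorem stmt2 {M n : ℕ} (A : Matrix (Fin M) (Fin n) ℂ)
    (K : ℕ) (hK : 1 ≤ K)
    (x₀ : Fin n → ℂ) (hx₀ : l0 x₀ ≤ K)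
    (y : Fin M → ℂ) (hy : y = A.mulVec x₀)
    (hδ : RIC A (2 * K) < Real.sqrt 2 - 1) :
    (∀ x : Fin n → ℂ, A.mulVec x = y → x ≠ x₀ → l0 x₀ < l0 x) ∧
    (∀ x : Fin n → ℂ, A.mulVec x = y → x ≠ x₀ → l1 x₀ < l1 x) := by
  obtain ⟨δ, hδ0, hδlt, hRIP⟩ := exists_delta A (2*K) (Real.sqrt 2 - 1) hδ
  have hs2 : Real.sqrt 2 ^ 2 = 2 := Real.sq_sqrt (by norm_num)
  have hδ1 : δ < 1 := by nlinarith [Real.sqrt_nonneg 2]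
  constructor
  · intro x hx hne
    by_contra hc
    push_neg at hc
    have hl0h : l0 (x - x₀) ≤ 2*K := le_trans (l0_sub_le x x₀) (by omega)
    have hAh : A.mulVec (x - x₀) = 0 := by
      rw [Matrix.mulVec_sub, hx, hy, sub_self]
    have h1 := (hRIP _ hl0h).1
    rw [show Q A (x - x₀) = 0 by simp [Q, hAh]] at h1
    have hz0 : nsq (x - x₀) ≤ 0 := by nlinarith [nsq_nonneg (x - x₀)]
    have hz := eq_zero_of_nsq_le hz0
    exact hne (funext fun i => sub_eq_zero.1 (hz i))
  · intro x hx hne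
    by_contra hc
    push_neg at hc
    exact l1_unique hK hδ0 hδlt hRIP hx₀ (by rw [hx, hy]) hne hc
end

section
/- Let A ∈ ℂ^{M×n}, X₀ ∈ ℂ^{n×L}, and Y = A X₀. If 2·‖X₀‖_{2,0} < spark(A) − 1 + rank(Y), then X₀ is the unique minimizer of ‖X‖_{2,0} over {X ∈ ℂ^{n×L} : AX = Y}; in particular every X with AX = Y and ‖X‖_{2,0} ≤ ‖X₀‖_{2,0} equals X₀. -/
open Matrix

/-- The number of nonzero rows of a matrix (the ℓ2,0 norm). -/
noncomputable def l20 {n L : ℕ} (X : Matrix (Fin n) (Fin L) ℂ) : ℕ :=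
  {i : Fin n | X i ≠ 0}.ncard

/-- The spark of a matrix `A`: the smallest number of columns of `A` that are
linearly dependent, i.e. `min {‖v‖₀ : v ≠ 0, Av = 0}` (`⊤` if `A` has trivial kernel). -/
noncomputable def sparkM {M n : ℕ} (A : Matrix (Fin M) (Fin n) ℂ) : ℕ∞ :=
  sInf {k : ℕ∞ | ∃ v : Fin n → ℂ, v ≠ 0 ∧ A.mulVec v = 0 ∧ k = (l0 v : ℕ∞)}

open Set Module Submodule

/-- In a subspace of dimension `> R.ncard` there is a nonzero vector vanishing on `R`. -/
lemma exists_vanishing {n : ℕ} (K : Submodule ℂ (Fin n → ℂ)) (R : Set (Fin n))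
    (h : R.ncard < Module.finrank ℂ K) :
    ∃ v ∈ K, v ≠ 0 ∧ ∀ i ∈ R, v i = 0 := by
  classical
  haveI := R.toFinite.fintype
  by_contra hc
  push_neg at hc
  have hinj : Function.Injective
      ((LinearMap.funLeft ℂ ℂ (Subtype.val : R → Fin n)).comp K.subtype) := by
    rw [← LinearMap.ker_eq_bot, Submodule.eq_bot_iff]
    intro x hx
    by_contra hx0
    have hxne : (x : Fin n → ℂ) ≠ 0 := by
      intro h0
      exact hx0 (Subtype.ext h0)
    obtain ⟨i, hiR, hi⟩ := hc (x : Fin n → ℂ) x.2 hxne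
    have : ((LinearMap.funLeft ℂ ℂ (Subtype.val : R → Fin n)).comp K.subtype) x = 0 := hx
    have := congrFun this ⟨i, hiR⟩
    exact hi this
  have hle := LinearMap.finrank_le_finrank_of_injective hinj
  have hcard : Module.finrank ℂ ({ x // x ∈ R } → ℂ) = R.ncard := by
    rw [Module.finrank_fintype_fun_eq_card, ← Nat.card_eq_fintype_card,
      Nat.card_coe_set_eq]
  omega

/-- The rank of a matrix is at most its number of nonzero rows. -/
lemma rank_le_l20 {n L : ℕ} (B : Matrix (Fin n) (Fin L) ℂ) : B.rank ≤ l20 B := by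
  classical
  rw [Matrix.rank_eq_finrank_span_row]
  set s : Set (Fin n) := {i | B i ≠ 0} with hs
  have hsub : Submodule.span ℂ (Set.range B) ≤ Submodule.span ℂ (B '' s) := by
    rw [Submodule.span_le]
    rintro _ ⟨i, rfl⟩
    by_cases hi : B i = 0
    · rw [hi]; exact (Submodule.span ℂ (B '' s)).zero_mem
    · exact Submodule.subset_span ⟨i, hi, rfl⟩
  haveI : Fintype ↥(B '' s) := (s.toFinite.image B).fintype
  have h1 := Submodule.finrank_mono hsub
  have h2 := finrank_span_le_card (R := ℂ) (B '' s)
  have h3 : (B '' s).toFinset.card = (B '' s).ncard := (Set.ncard_eq_toFinset_card' _).symm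
  have h4 : (B '' s).ncard ≤ s.ncard := Set.ncard_image_le s.toFinite
  have h5 : l20 B = s.ncard := rfl
  have h6 : Module.finrank ℂ (Submodule.span ℂ (Set.range B.row)) =
      Module.finrank ℂ (Submodule.span ℂ (Set.range B)) := rfl
  omega

open Classical in
/-- Keep only the rows in `Q`, zeroing the others. -/
noncomputable def rowSel {n L : ℕ} (Q : Set (Fin n)) (B : Matrix (Fin n) (Fin L) ℂ) :
    Matrix (Fin n) (Fin L) ℂ := Matrix.of fun i j => if i ∈ Q then B i j else 0

open Classical in
lemma rowSel_eq_mul {n L : ℕ} (Q : Set (Fin n)) (B : Matrix (Fin n) (Fin L) ℂ) :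
    rowSel Q B = Matrix.diagonal (fun i => if i ∈ Q then (1 : ℂ) else 0) * B := by
  classical
  ext i j
  rw [Matrix.diagonal_mul]
  simp only [rowSel, Matrix.of_apply]
  split <;> simp

lemma rank_rowSel_le {n L : ℕ} (Q : Set (Fin n)) (B : Matrix (Fin n) (Fin L) ℂ) :
    (rowSel Q B).rank ≤ B.rank := by
  rw [rowSel_eq_mul]
  exact Matrix.rank_mul_le_right _ _

lemma rank_add_le' {n L : ℕ} (B C : Matrix (Fin n) (Fin L) ℂ) :
    (B + C).rank ≤ B.rank + C.rank := by
  have hle : LinearMap.range (B + C).mulVecLin ≤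
      LinearMap.range B.mulVecLin ⊔ LinearMap.range C.mulVecLin := by
    rintro _ ⟨c, rfl⟩
    rw [Matrix.mulVecLin_apply, Matrix.add_mulVec]
    exact Submodule.add_mem_sup ⟨c, rfl⟩ ⟨c, rfl⟩
  calc (B + C).rank ≤ Module.finrank ℂ
        ↥(LinearMap.range B.mulVecLin ⊔ LinearMap.range C.mulVecLin) :=
        Submodule.finrank_mono hle
    _ ≤ B.rank + C.rank := Submodule.finrank_add_le_finrank_add_finrank _ _

theorem stmt3 {M n L : ℕ} (A : Matrix (Fin M) (Fin n) ℂ)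
    (X₀ : Matrix (Fin n) (Fin L) ℂ)
    (Y : Matrix (Fin M) (Fin L) ℂ) (hY : Y = A * X₀)
    (hcond : ((2 * l20 X₀ : ℕ) : ℕ∞) < sparkM A - 1 + (Y.rank : ℕ∞)) :
    ∀ X : Matrix (Fin n) (Fin L) ℂ, A * X = Y → l20 X ≤ l20 X₀ → X = X₀ := by
  classical
  intro X hX hlX
  by_contra hne
  set S₀ : Set (Fin n) := {i | X₀ i ≠ 0} with hS₀
  set S : Set (Fin n) := {i | X i ≠ 0} with hSdef
  set T : Set (Fin n) := S ∪ S₀ with hT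
  set N : Matrix (Fin n) (Fin L) ℂ := X₀ - X with hN
  have hNne : N ≠ 0 := fun h0 => hne (by
    have := sub_eq_zero.mp h0
    exact this.symm)
  have hAN : A * N = 0 := by
    rw [hN, Matrix.mul_sub, ← hY, hX, sub_self]
  set d : ℕ := N.rank with hd
  set t : ℕ := T.ncard with ht
  set c : ℕ := (S ∩ S₀).ncard with hc
  set r : ℕ := Y.rank with hr
  -- the column space of N
  set K : Submodule ℂ (Fin n → ℂ) := LinearMap.range N.mulVecLin with hK
  have hKrank : Module.finrank ℂ K = d := rfl
  -- every vector of K is supported on T and in the kernel of A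
  have hKsupp : ∀ v ∈ K, ∀ i, i ∉ T → v i = 0 := by
    rintro _ ⟨cvec, rfl⟩ i hiT
    have hXi : X i = 0 := by
      by_contra h; exact hiT (Or.inl h)
    have hX₀i : X₀ i = 0 := by
      by_contra h; exact hiT (Or.inr h)
    have hNi : ∀ j, N i j = 0 := by
      intro j
      simp [hN, Matrix.sub_apply, congrFun hXi j, congrFun hX₀i j]
    simp [Matrix.mulVecLin_apply, Matrix.mulVec, dotProduct, hNi]
  have hKker : ∀ v ∈ K, A.mulVec v = 0 := by
    rintro _ ⟨cvec, rfl⟩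
    rw [Matrix.mulVecLin_apply, Matrix.mulVec_mulVec, hAN, Matrix.zero_mulVec]
  -- d ≥ 1
  have hd1 : 1 ≤ d := by
    rw [← hKrank]
    have : ∃ x : K, x ≠ 0 := by
      obtain ⟨i, j, hij⟩ : ∃ i j, N i j ≠ 0 := by
        by_contra h; push_neg at h
        exact hNne (by ext i j; exact h i j)
      refine ⟨⟨N.mulVec (Pi.single j 1), ⟨Pi.single j 1, rfl⟩⟩, ?_⟩
      intro h0
      have : N.mulVec (Pi.single j 1) = 0 := congrArg Subtype.val h0
      have := congrFun this i
      rw [Matrix.mulVec_single] at this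
      simp at this
      exact hij this
    exact Module.finrank_pos_iff_exists_ne_zero.mpr this
  -- d ≤ t
  have hdt : d ≤ t := by
    by_contra hlt
    push_neg at hlt
    obtain ⟨v, hvK, hv0, hvvan⟩ := exists_vanishing K T (by omega)
    apply hv0
    funext i
    by_cases hiT : i ∈ T
    · exact hvvan i hiT
    · exact hKsupp v hvK i hiT
  -- find a short kernel vector: spark ≤ t - (d-1)
  obtain ⟨R, hRT, hRcard⟩ := Set.exists_subset_card_eq (s := T) (n := d - 1) (by omega)
  obtain ⟨v, hvK, hv0, hvvan⟩ := exists_vanishing K R (by omega)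
  have hsuppv : {j | v j ≠ 0} ⊆ T \ R := by
    intro j hj
    constructor
    · by_contra hjT; exact hj (hKsupp v hvK j hjT)
    · intro hjR; exact hj (hvvan j hjR)
  have hl0v : l0 v ≤ t - (d - 1) := by
    have := Set.ncard_le_ncard hsuppv (Set.toFinite _)
    rwa [Set.ncard_diff hRT (Set.toFinite R), hRcard] at this
  have hspark : sparkM A ≤ ((l0 v : ℕ) : ℕ∞) :=
    sInf_le ⟨v, hv0, hKker v hvK, rfl⟩
  have hl0pos : 1 ≤ l0 v := by
    obtain ⟨j, hj⟩ := Function.ne_iff.mp hv0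
    have hne' : ({j | v j ≠ 0} : Set (Fin n)).Nonempty := ⟨j, by simpa using hj⟩
    exact (Set.ncard_pos (Set.toFinite _)).mpr hne'
  -- r ≤ c + d
  have hrcd : r ≤ c + d := by
    have h1 : r ≤ X₀.rank := by
      rw [hr, hY]; exact Matrix.rank_mul_le_right A X₀
    have hsplit : X₀ = rowSel (S ∩ S₀) X₀ + rowSel (S ∩ S₀)ᶜ X₀ := by
      ext i j
      simp only [Matrix.add_apply, rowSel, Matrix.of_apply]
      by_cases hi : i ∈ S ∩ S₀
      · rw [if_pos hi, if_neg (show ¬ (i ∈ (S ∩ S₀)ᶜ) from fun h => h hi), add_zero]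
      · rw [if_neg hi, if_pos (show i ∈ (S ∩ S₀)ᶜ from hi), zero_add]
    have h2 : X₀.rank ≤ (rowSel (S ∩ S₀) X₀).rank + (rowSel (S ∩ S₀)ᶜ X₀).rank := by
      conv_lhs => rw [hsplit]
      exact rank_add_le' _ _
    have h3 : (rowSel (S ∩ S₀) X₀).rank ≤ c := by
      refine le_trans (rank_le_l20 _) ?_
      refine le_trans (Set.ncard_le_ncard ?_ (Set.toFinite _)) le_rfl
      intro i hi
      simp only [mem_setOf_eq] at hi ⊢
      by_contra hiP
      apply hi
      funext j
      simp only [rowSel, Matrix.of_apply, if_neg hiP, Pi.zero_apply]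
    have h4 : rowSel (S ∩ S₀)ᶜ X₀ = rowSel (S₀ \ S) N := by
      ext i j
      simp only [rowSel, Matrix.of_apply]
      by_cases hiS : i ∈ S <;> by_cases hiS₀ : i ∈ S₀
      · rw [if_neg (show ¬ (i ∈ (S ∩ S₀)ᶜ) from fun h => h ⟨hiS, hiS₀⟩),
          if_neg (show ¬ (i ∈ S₀ \ S) from fun h => h.2 hiS)]
      · rw [if_pos (show i ∈ (S ∩ S₀)ᶜ from fun h => hiS₀ h.2),
          if_neg (show ¬ (i ∈ S₀ \ S) from fun h => hiS₀ h.1)]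
        exact congrFun (not_not.mp hiS₀) j
      · rw [if_pos (show i ∈ (S ∩ S₀)ᶜ from fun h => hiS h.1), if_pos (show i ∈ S₀ \ S from ⟨hiS₀, hiS⟩)]
        rw [hN]
        simp [Matrix.sub_apply, congrFun (not_not.mp hiS) j]
      · rw [if_pos (show i ∈ (S ∩ S₀)ᶜ from fun h => hiS h.1),
          if_neg (show ¬ (i ∈ S₀ \ S) from fun h => hiS₀ h.1)]
        exact congrFun (not_not.mp hiS₀) j
    have h5 : (rowSel (S₀ \ S) N).rank ≤ d := rank_rowSel_le _ _
    rw [h4] at h2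
    omega
  -- t + c ≤ 2 * l20 X₀
  have htc : t + c ≤ 2 * l20 X₀ := by
    have huai := Set.ncard_union_add_ncard_inter S S₀ (Set.toFinite _) (Set.toFinite _)
    rw [← hT] at huai
    have hSk : S.ncard ≤ l20 X₀ := hlX
    have hS₀k : S₀.ncard = l20 X₀ := rfl
    omega
  -- conclude
  have hfinal : sparkM A - 1 + (r : ℕ∞) ≤ ((2 * l20 X₀ : ℕ) : ℕ∞) := by
    calc sparkM A - 1 + (r : ℕ∞) ≤ ((l0 v : ℕ) : ℕ∞) - 1 + (r : ℕ∞) :=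
          add_le_add_left (tsub_le_tsub_right hspark 1) _
      _ = ((l0 v - 1 + r : ℕ) : ℕ∞) := by
          rw [Nat.cast_add, ← Nat.cast_one (R := ℕ∞), ← ENat.coe_sub]
      _ ≤ ((2 * l20 X₀ : ℕ) : ℕ∞) := by
          rw [Nat.cast_le]
          omega
  exact absurd hcond (not_lt.mpr hfinal)
end

section
/- For every z ∈ ℂ^N, the atomic ℓ0 norm ‖z‖_{𝒜,0} equals the minimum of rank(T(u)) over all x ∈ ℝ and u ∈ ℂ^N such that the (N+1)×(N+1) block matrix [[x, z^H],[z, T(u)]] is positive semidefinite, and this minimum is attained. -/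
open Matrix
open scoped ComplexOrder

/-- The steering vector `a(f) ∈ ℂ^N`, `a(f)_j = exp(2πi·j·f)` for `j = 0,…,N−1`. -/
noncomputable def steer (N : ℕ) (f : ℝ) : Fin N → ℂ :=
  fun j => Complex.exp (2 * (Real.pi : ℂ) * Complex.I * ((j : ℕ) : ℂ) * (f : ℂ))

/-- The Hermitian Toeplitz matrix whose first row is `u`. -/
noncomputable def Toep {N : ℕ} (u : Fin N → ℂ) : Matrix (Fin N) (Fin N) ℂ :=
  Matrix.of fun j k =>
    if (j : ℕ) ≤ (k : ℕ) then u ⟨(k : ℕ) - (j : ℕ), Nat.lt_of_le_of_lt (Nat.sub_le _ _) k.isLt⟩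
    else star (u ⟨(j : ℕ) - (k : ℕ), Nat.lt_of_le_of_lt (Nat.sub_le _ _) j.isLt⟩)

/-- The block matrix `[[x, zᴴ], [z, T(u)]]`. -/
noncomputable def smvBlock {N : ℕ} (x : ℝ) (z u : Fin N → ℂ) :
    Matrix (Fin 1 ⊕ Fin N) (Fin 1 ⊕ Fin N) ℂ :=
  Matrix.fromBlocks (Matrix.of fun _ _ => (x : ℂ)) (Matrix.of fun _ j => star (z j))
    (Matrix.of fun i _ => z i) (Toep u)

/-- The atomic ℓ0 norm of `z ∈ ℂ^N`. -/
noncomputable def atomL0 {N : ℕ} (z : Fin N → ℂ) : ℕ :=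
  sInf {K : ℕ | ∃ (f : Fin K → ℝ) (s : Fin K → ℂ),
    (∀ k, f k ∈ Set.Ico (0 : ℝ) 1) ∧ z = ∑ k, s k • steer N (f k)}

namespace SMVAux

lemma steer_apply (N : ℕ) (f : ℝ) (j : Fin N) :
    steer N f j = Complex.exp (2 * (Real.pi:ℂ) * Complex.I * (f:ℂ)) ^ (j:ℕ) := by
  rw [steer, ← Complex.exp_nat_mul]; ring_nf

lemma exists_freq {μ : ℂ} (h : ‖μ‖ = 1) :
    ∃ f ∈ Set.Ico (0:ℝ) 1, Complex.exp (2 * (Real.pi:ℂ) * Complex.I * (f:ℂ)) = μ := by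
  have hπ : (Real.pi : ℝ) ≠ 0 := Real.pi_ne_zero
  set a : ℝ := μ.arg / (2 * Real.pi) with ha
  refine ⟨Int.fract a, ⟨Int.fract_nonneg _, Int.fract_lt_one _⟩, ?_⟩
  have h1 : ((Int.fract a : ℝ) : ℂ) = (a : ℂ) - ((⌊a⌋ : ℤ) : ℂ) := by
    rw [Int.fract]; push_cast; ring
  rw [h1, mul_sub, Complex.exp_sub]
  have h2 : Complex.exp (2 * (Real.pi:ℂ) * Complex.I * ((⌊a⌋:ℤ):ℂ)) = 1 := by
    rw [show 2 * (Real.pi:ℂ) * Complex.I * ((⌊a⌋:ℤ):ℂ)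
        = ((⌊a⌋:ℤ):ℂ) * (2 * (Real.pi:ℂ) * Complex.I) by ring]
    exact Complex.exp_int_mul_two_pi_mul_I _
  rw [h2, div_one]
  have h3 : 2 * (Real.pi:ℂ) * Complex.I * (a:ℂ) = (μ.arg:ℂ) * Complex.I := by
    rw [ha]; push_cast
    field_simp
  rw [h3]
  have := Complex.norm_mul_exp_arg_mul_I μ
  rwa [h, Complex.ofReal_one, one_mul] at this

lemma mulVec_eq_sum_cols {m n : Type*} [Fintype n] (A : Matrix m n ℂ) (d : n → ℂ) :
    A *ᵥ d = ∑ j, d j • (fun i => A i j) := by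
  ext i
  simp [Matrix.mulVec, dotProduct, Finset.sum_apply, mul_comm]

lemma gram_dot {m n : Type*} [Fintype m] [Fintype n] (A B : Matrix m n ℂ) (d e : n → ℂ) :
    star (A *ᵥ d) ⬝ᵥ (B *ᵥ e) = star d ⬝ᵥ ((Aᴴ * B) *ᵥ e) := by
  rw [Matrix.star_mulVec, ← Matrix.dotProduct_mulVec, Matrix.mulVec_mulVec]

lemma sum_dot {ι m : Type*} [Fintype m] (s : Finset ι) (f : ι → (m → ℂ)) (v : m → ℂ) :
    (∑ μ ∈ s, f μ) ⬝ᵥ v = ∑ μ ∈ s, (f μ) ⬝ᵥ v := by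
  simp only [dotProduct, Finset.sum_apply, Finset.sum_mul]
  exact Finset.sum_comm

lemma exists_decomp_card (N : ℕ) (z : Fin N → ℂ) :
    ∃ (f : Fin N → ℝ) (s : Fin N → ℂ),
      (∀ k, f k ∈ Set.Ico (0:ℝ) 1) ∧ z = ∑ k, s k • steer N (f k) := by
  classical
  set fr : Fin N → ℝ := fun k => (k:ℝ)/(N:ℝ) with hfr
  set v : Fin N → ℂ := fun k => Complex.exp (2 * (Real.pi:ℂ) * Complex.I * ((fr k : ℝ):ℂ)) with hv
  set B : Matrix (Fin N) (Fin N) ℂ := (Matrix.vandermonde v)ᵀ with hB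
  have hvinj : Function.Injective v := by
    intro k k' hkk
    have hN : 0 < N := k.pos
    rw [hv] at hkk
    simp only at hkk
    obtain ⟨n, hn⟩ := Complex.exp_eq_exp_iff_exists_int.mp hkk
    have hc : (2 * (Real.pi:ℂ) * Complex.I) ≠ 0 := by
      simp [Real.pi_ne_zero, Complex.I_ne_zero, Complex.ofReal_ne_zero]
    have h1 : ((fr k : ℝ):ℂ) = ((fr k' : ℝ):ℂ) + (n:ℂ) := by
      have : 2 * (Real.pi:ℂ) * Complex.I * ((fr k : ℝ):ℂ)
          = 2 * (Real.pi:ℂ) * Complex.I * (((fr k' : ℝ):ℂ) + (n:ℂ)) := by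
        rw [hn]; ring
      exact mul_left_cancel₀ hc this
    have h2 : ((k:ℕ):ℂ) = ((k':ℕ):ℂ) + (n:ℂ) * (N:ℂ) := by
      have hNc : ((N:ℕ):ℂ) ≠ 0 := by
        exact_mod_cast Nat.cast_ne_zero.mpr hN.ne'
      rw [hfr] at h1
      push_cast at h1 ⊢
      field_simp at h1
      linear_combination h1
    have h3 : ((k:ℕ):ℤ) = ((k':ℕ):ℤ) + n * (N:ℤ) := by exact_mod_cast h2
    have hkb : ((k:ℕ):ℤ) < N := by exact_mod_cast k.isLt
    have hkb' : ((k':ℕ):ℤ) < N := by exact_mod_cast k'.isLt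
    have hk0 : 0 ≤ ((k:ℕ):ℤ) := by positivity
    have hk0' : 0 ≤ ((k':ℕ):ℤ) := by positivity
    have hn0 : n = 0 := by nlinarith [hN]
    rw [hn0] at h3
    simp at h3
    exact Fin.ext (by exact_mod_cast h3)
  have hdet : B.det ≠ 0 := by
    rw [hB, Matrix.det_transpose, Matrix.det_vandermonde]
    rw [Finset.prod_ne_zero_iff]
    intro i _
    rw [Finset.prod_ne_zero_iff]
    intro j hj
    rw [Finset.mem_Ioi] at hj
    exact sub_ne_zero.mpr fun h => (hj.ne' (hvinj h)).elim
  refine ⟨fr, B⁻¹ *ᵥ z, fun k => ⟨by positivity, ?_⟩, ?_⟩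
  · rw [hfr]
    have hN : (0:ℝ) < N := by exact_mod_cast k.pos
    exact (div_lt_one hN).mpr (by exact_mod_cast k.isLt)
  · have hz : B *ᵥ (B⁻¹ *ᵥ z) = z := by
      rw [Matrix.mulVec_mulVec, Matrix.mul_nonsing_inv _ (isUnit_iff_ne_zero.mpr hdet), Matrix.one_mulVec]
    have hsum : ∑ k, (B⁻¹ *ᵥ z) k • steer N (fr k) = B *ᵥ (B⁻¹ *ᵥ z) := by
      conv_rhs => rw [mulVec_eq_sum_cols B]
      apply Finset.sum_congr rfl
      intro k _
      congr 1
      funext i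
      rw [steer_apply, hB]
      simp [Matrix.vandermonde, hv]
    rw [hsum, hz]

variable {n : ℕ}

/-- Shift a vector up by one, putting zero in position 0. -/
noncomputable def shft (d : Fin (n+1) → ℂ) : Fin (n+1) → ℂ :=
  Fin.cons 0 (fun i => d i.castSucc)

lemma shft_dot (T : Matrix (Fin (n+1)) (Fin (n+1)) ℂ)
    (hsh2 : ∀ i j : Fin n, T i.succ j.succ = T i.castSucc j.castSucc)
    (d : Fin (n+1) → ℂ) (hd : d (Fin.last n) = 0) :
    star (shft d) ⬝ᵥ (T *ᵥ shft d) = star d ⬝ᵥ (T *ᵥ d) := by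
  have expand : ∀ v : Fin (n+1) → ℂ, star v ⬝ᵥ (T *ᵥ v)
      = ∑ i, ∑ j, (starRingEnd ℂ) (v i) * (T i j * v j) := by
    intro v
    simp [dotProduct, Matrix.mulVec, Finset.mul_sum, Pi.star_apply, mul_assoc]
  rw [expand, expand]
  rw [Fin.sum_univ_succ]
  conv_rhs => rw [Fin.sum_univ_castSucc]
  simp only [shft, Fin.cons_zero, map_zero, zero_mul, Finset.sum_const_zero, zero_add,
    Fin.cons_succ, hd, add_zero]
  apply Finset.sum_congr rfl
  intro i _
  rw [Fin.sum_univ_succ]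
  conv_rhs => rw [Fin.sum_univ_castSucc]
  simp only [shft, Fin.cons_zero, mul_zero, zero_mul, Fin.cons_succ, hd, add_zero, zero_add]
  apply Finset.sum_congr rfl
  intro j _
  rw [hsh2 i j]

lemma shft_ker (T : Matrix (Fin (n+1)) (Fin (n+1)) ℂ) (hT : T.PosSemidef)
    (hsh2 : ∀ i j : Fin n, T i.succ j.succ = T i.castSucc j.castSucc)
    (d : Fin (n+1) → ℂ) (hker : T *ᵥ d = 0) (hd : d (Fin.last n) = 0) :
    T *ᵥ shft d = 0 := by
  rw [← hT.dotProduct_mulVec_zero_iff]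
  rw [shft_dot T hsh2 d hd, hker, dotProduct_zero]

/-- climb a kernel vector to one whose last entry is nonzero -/
lemma shft_climb (T : Matrix (Fin (n+1)) (Fin (n+1)) ℂ) (hT : T.PosSemidef)
    (hsh2 : ∀ i j : Fin n, T i.succ j.succ = T i.castSucc j.castSucc) :
    ∀ (k : ℕ) (g : Fin (n+1) → ℂ) (i : Fin (n+1)), T *ᵥ g = 0 → g i ≠ 0 →
      (∀ j : Fin (n+1), (i:ℕ) < (j:ℕ) → g j = 0) → (i:ℕ) + k = n →
      ∃ h, T *ᵥ h = 0 ∧ h (Fin.last n) ≠ 0 := by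
  intro k
  induction k with
  | zero =>
    intro g i hg hgi _ hik
    have : i = Fin.last n := Fin.ext (by simpa using hik)
    exact ⟨g, hg, by rwa [← this]⟩
  | succ k ih =>
    intro g i hg hgi hup hik
    have hlast : g (Fin.last n) = 0 := hup _ (by simp [Fin.last]; omega)
    have hi1 : (i:ℕ) + 1 < n + 1 := by omega
    refine ih (shft g) ⟨(i:ℕ)+1, hi1⟩ (shft_ker T hT hsh2 g hg hlast) ?_ ?_ (by simp; omega)
    · have : (⟨(i:ℕ)+1, hi1⟩ : Fin (n+1)) = Fin.succ ⟨(i:ℕ), by omega⟩ := by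
        apply Fin.ext; simp
      rw [this, shft, Fin.cons_succ]
      simpa using hgi
    · intro j hj
      rcases Fin.eq_zero_or_eq_succ j with h0 | ⟨j', rfl⟩
      · subst h0; simp at hj
      · simp only [shft, Fin.cons_succ]
        apply hup
        simp at hj ⊢
        omega

set_option maxHeartbeats 1000000 in
lemma exists_small_decomp {N : ℕ} (T : Matrix (Fin N) (Fin N) ℂ)
    (hT : T.PosSemidef)
    (hshift : ∀ (i j : ℕ) (hi : i + 1 < N) (hj : j + 1 < N),
      T ⟨i+1, hi⟩ ⟨j+1, hj⟩ = T ⟨i, by omega⟩ ⟨j, by omega⟩)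
    (z : Fin N → ℂ) (hz : ∃ w, T *ᵥ w = z) :
    ∃ K ≤ T.rank, ∃ (f : Fin K → ℝ) (s : Fin K → ℂ),
      (∀ k, f k ∈ Set.Ico (0:ℝ) 1) ∧ z = ∑ k, s k • steer N (f k) := by
  classical
  by_cases hrN : N ≤ T.rank
  · obtain ⟨f, s, hmem, hsum⟩ := exists_decomp_card N z
    exact ⟨N, hrN, f, s, hmem, hsum⟩
  push_neg at hrN
  obtain ⟨w, hw⟩ := hz
  rcases Nat.eq_zero_or_pos T.rank with hr0 | hrpos
  · -- rank 0 : z = 0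
    have hrange : LinearMap.range T.mulVecLin = ⊥ := by
      rw [← Submodule.finrank_eq_zero (R := ℂ)]
      exact hr0
    have hz0 : z = 0 := by
      have : T.mulVecLin w ∈ LinearMap.range T.mulVecLin := LinearMap.mem_range_self _ _
      rw [hrange, Submodule.mem_bot] at this
      rw [← hw, ← this]
      rfl
    refine ⟨0, Nat.zero_le _, Fin.elim0, Fin.elim0, fun k => k.elim0, by simp [hz0]⟩
  -- main case : 1 ≤ rank < N
  obtain ⟨n, rfl⟩ : ∃ n, N = n + 1 := ⟨N - 1, by omega⟩
  set r := T.rank with hr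
  have hrn : r ≤ n := by omega
  have hsh2 : ∀ i j : Fin n, T i.succ j.succ = T i.castSucc j.castSucc := by
    intro i j
    have := hshift i j (by omega) (by omega)
    convert this using 2 <;> apply Fin.ext <;> simp
  -- square root realization
  obtain ⟨C, hCps, hC2C⟩ : ∃ C : Matrix (Fin (n+1)) (Fin (n+1)) ℂ, C.PosSemidef ∧ C * C = T := by
    open scoped MatrixOrder in
    exact ⟨CFC.sqrt T, Matrix.nonneg_iff_posSemidef.mp (CFC.sqrt_nonneg T), CFC.sqrt_mul_sqrt_self T hT.nonneg⟩
  have hCH : Cᴴ = C := hCps.1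
  have hC2 : C * C = T := hC2C
  set x : Fin (n+1) → (Fin (n+1) → ℂ) := fun j i => C i j with hx
  have hCsymm : ∀ i j, C i j = (starRingEnd ℂ) (C j i) := by
    intro i j
    conv_lhs => rw [← hCH]
    rfl
  have hTg : ∀ i j, T i j = star (x i) ⬝ᵥ x j := by
    intro i j
    rw [← hC2, Matrix.mul_apply]
    simp only [dotProduct, Pi.star_apply, hx]
    apply Finset.sum_congr rfl
    intro k _
    rw [hCsymm i k]
    rfl
  have kerTC : ∀ d, T *ᵥ d = 0 ↔ C *ᵥ d = 0 := by
    intro d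
    constructor
    · intro hd
      have h0 : star (C *ᵥ d) ⬝ᵥ (C *ᵥ d) = 0 := by
        rw [gram_dot, hCH, hC2, hd, dotProduct_zero]
      exact dotProduct_star_self_eq_zero.mp h0
    · intro hd
      rw [← hC2, ← Matrix.mulVec_mulVec, hd, Matrix.mulVec_zero]
  -- a kernel vector with nonzero last coordinate
  have hker_ex : ∃ g, T *ᵥ g = 0 ∧ g (Fin.last n) ≠ 0 := by
    have hkerpos : LinearMap.ker T.mulVecLin ≠ ⊥ := by
      intro hbot
      have h1 := LinearMap.finrank_range_add_finrank_ker (T.mulVecLin)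
      rw [hbot, finrank_bot, add_zero] at h1
      have h2 : Module.finrank ℂ (LinearMap.range T.mulVecLin) = r := rfl
      rw [h2, Module.finrank_pi] at h1
      simp at h1
      omega
    obtain ⟨g, hgker, hg0⟩ := Submodule.exists_mem_ne_zero_of_ne_bot hkerpos
    have hgT : T *ᵥ g = 0 := hgker
    have hex : ∃ i, g i ≠ 0 := by
      by_contra hc
      push_neg at hc
      exact hg0 (funext hc)
    have hne : (Finset.univ.filter (fun i => g i ≠ 0)).Nonempty := by
      obtain ⟨i, hi⟩ := hex
      exact ⟨i, by simp [hi]⟩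
    obtain ⟨i0, hi0mem, hi0max⟩ : ∃ i0 ∈ Finset.univ.filter (fun i => g i ≠ 0),
        ∀ j ∈ Finset.univ.filter (fun i => g i ≠ 0), j ≤ i0 :=
      ⟨_, Finset.max'_mem _ hne, fun j hj => Finset.le_max' _ j hj⟩
    have hgi0 : g i0 ≠ 0 := by simpa using hi0mem
    have hup : ∀ j : Fin (n+1), (i0:ℕ) < (j:ℕ) → g j = 0 := by
      intro j hj
      by_contra hgj
      have hle : j ≤ i0 := hi0max j (by simp [hgj])
      have : (j:ℕ) ≤ (i0:ℕ) := hle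
      omega
    exact shft_climb T hT hsh2 (n - (i0:ℕ)) g i0 hgT hgi0 hup (by have := i0.isLt; omega)
  -- the two submatrices and associated maps
  set C1 := C.submatrix id Fin.castSucc with hC1
  set C2 := C.submatrix id Fin.succ with hC2'
  set φ := C1.mulVecLin with hφ
  set ψ := C2.mulVecLin with hψ
  have hφsnoc : ∀ d : Fin n → ℂ, φ d = C *ᵥ (Fin.snoc d 0) := by
    intro d
    funext i
    rw [hφ, Matrix.mulVecLin_apply]
    simp only [Matrix.mulVec, dotProduct, hC1, Matrix.submatrix_apply, id]
    conv_rhs => rw [Fin.sum_univ_castSucc]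
    simp [Fin.snoc_castSucc, Fin.snoc_last]
  have hψcons : ∀ d : Fin n → ℂ, ψ d = C *ᵥ (Fin.cons 0 d) := by
    intro d
    funext i
    rw [hψ, Matrix.mulVecLin_apply]
    simp only [Matrix.mulVec, dotProduct, hC2', Matrix.submatrix_apply, id]
    conv_rhs => rw [Fin.sum_univ_succ]
    simp [Fin.cons_zero, Fin.cons_succ]
  have hkerφψ : ∀ d, φ d = 0 → ψ d = 0 := by
    intro d hd
    have h1 : C *ᵥ (Fin.snoc d 0) = 0 := by rw [← hφsnoc]; exact hd
    have h2 : T *ᵥ (Fin.snoc d 0) = 0 := (kerTC _).mpr h1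
    have h3 : T *ᵥ shft (Fin.snoc d 0) = 0 :=
      shft_ker T hT hsh2 _ h2 (by simp)
    have h4 : shft (Fin.snoc d 0) = Fin.cons 0 d := by
      funext i
      rcases Fin.eq_zero_or_eq_succ i with h0 | ⟨j, rfl⟩
      · subst h0; simp [shft]
      · simp [shft, Fin.cons_succ, Fin.snoc_castSucc]
    rw [h4] at h3
    rw [hψcons]
    exact (kerTC _).mp h3
  have e1T : ∀ (a b : Fin (n+1)), (∑ i, (starRingEnd ℂ) (C i a) * C i b) = T a b := by
    intro a b
    rw [hTg]
    simp [dotProduct, hx]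
  have hgram12 : C2ᴴ * C2 = C1ᴴ * C1 := by
    ext k l
    simp only [Matrix.mul_apply, Matrix.conjTranspose_apply, hC1, hC2',
      Matrix.submatrix_apply, id, RCLike.star_def]
    rw [e1T, e1T, hsh2 k l]
  have F_iso : ∀ d e : Fin n → ℂ, star (ψ d) ⬝ᵥ (ψ e) = star (φ d) ⬝ᵥ (φ e) := by
    intro d e
    simp only [hφ, hψ, Matrix.mulVecLin_apply]
    rw [gram_dot, gram_dot, hgram12]
  have h_rangeφ : LinearMap.range φ = LinearMap.range C.mulVecLin := by
    rw [hφ, Matrix.range_mulVecLin, Matrix.range_mulVecLin]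
    apply le_antisymm
    · apply Submodule.span_mono
      rintro _ ⟨k, rfl⟩
      exact ⟨Fin.castSucc k, rfl⟩
    · rw [Submodule.span_le]
      rintro _ ⟨j, rfl⟩
      by_cases hj : (j:ℕ) < n
      · apply Submodule.subset_span
        refine ⟨⟨(j:ℕ), hj⟩, ?_⟩
        funext i
        simp only [Matrix.transpose_apply, hC1, Matrix.submatrix_apply, id]
        rfl
      · have hjl : j = Fin.last n := by
          apply Fin.ext
          have := j.isLt
          simp only [Fin.last]
          omega
        subst hjl
        obtain ⟨g, hg, hglast⟩ := hker_ex
        have hCg : C *ᵥ g = 0 := (kerTC g).mp hg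
        rw [mulVec_eq_sum_cols] at hCg
        rw [Fin.sum_univ_castSucc] at hCg
        have h5 : g (Fin.last n) • (fun i => C i (Fin.last n))
            = - ∑ k : Fin n, g k.castSucc • (fun i => C i k.castSucc) :=
          eq_neg_of_add_eq_zero_right hCg
        have h6 : (C.col (Fin.last n) : Fin (n+1) → ℂ)
            = (-(g (Fin.last n))⁻¹) • ∑ k : Fin n, g k.castSucc • (fun i => C i k.castSucc) := by
          have h7 := congrArg (fun v : Fin (n+1) → ℂ => (g (Fin.last n))⁻¹ • v) h5
          beta_reduce at h7
          rw [inv_smul_smul₀ hglast] at h7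
          have h8 : (C.col (Fin.last n) : Fin (n+1) → ℂ) = (fun i => C i (Fin.last n)) := rfl
          rw [h8, h7, smul_neg, ← neg_smul]
        rw [h6]
        apply Submodule.smul_mem
        apply Submodule.sum_mem
        intro k _
        apply Submodule.smul_mem
        apply Submodule.subset_span
        exact ⟨k, rfl⟩
  have hx_mem : ∀ j, x j ∈ LinearMap.range φ := by
    intro j
    rw [h_rangeφ]
    refine ⟨Pi.single j 1, ?_⟩
    rw [Matrix.mulVecLin_apply, Matrix.mulVec_single]
    funext i
    simp [hx]
  -- the isometric endomorphism U of W
  set Wc := LinearMap.range φ with hWc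
  haveI : FiniteDimensional ℂ Wc := inferInstance
  have hfinrank : Module.finrank ℂ Wc = r := by
    rw [h_rangeφ]
    have h2 : Module.finrank ℂ (LinearMap.range C.mulVecLin) = C.rank := rfl
    rw [h2, hr]
    have h3 : C * Cᴴ = T := by rw [hCH, hC2]
    rw [← h3, Matrix.rank_self_mul_conjTranspose]
  have hψW : ∀ d, ψ d ∈ Wc := by
    intro d
    rw [h_rangeφ]
    exact ⟨Fin.cons 0 d, by rw [Matrix.mulVecLin_apply]; exact (hψcons d).symm⟩
  set L0 : ((Fin n → ℂ) ⧸ LinearMap.ker φ) →ₗ[ℂ] (Fin (n+1) → ℂ) :=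
    Submodule.liftQ (LinearMap.ker φ) ψ (fun d hd => hkerφψ d hd) with hL0
  set U1 : Wc →ₗ[ℂ] (Fin (n+1) → ℂ) :=
    L0 ∘ₗ (LinearMap.quotKerEquivRange φ).symm.toLinearMap with hU1def
  have hU1 : ∀ d : Fin n → ℂ, U1 ⟨φ d, LinearMap.mem_range_self φ d⟩ = ψ d := by
    intro d
    have h1 : LinearMap.quotKerEquivRange φ (Submodule.Quotient.mk d)
        = ⟨φ d, LinearMap.mem_range_self φ d⟩ := by
      apply Subtype.ext
      rw [LinearMap.quotKerEquivRange_apply_mk]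
    have h2 : (LinearMap.quotKerEquivRange φ).symm ⟨φ d, LinearMap.mem_range_self φ d⟩
        = Submodule.Quotient.mk d := by
      rw [← h1, LinearEquiv.symm_apply_apply]
    rw [hU1def]
    simp only [LinearMap.coe_comp, Function.comp_apply, LinearEquiv.coe_coe]
    rw [h2, hL0]
    exact Submodule.liftQ_apply _ _ _
  have hU1W : ∀ a : Wc, U1 a ∈ Wc := by
    intro a
    obtain ⟨d, hd⟩ := a.2
    have ha : a = ⟨φ d, LinearMap.mem_range_self φ d⟩ := Subtype.ext hd.symm
    rw [ha, hU1]
    exact hψW d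
  set U : Module.End ℂ Wc := LinearMap.codRestrict Wc U1 hU1W with hU
  have hUapp : ∀ d : Fin n → ℂ,
      ((U ⟨φ d, LinearMap.mem_range_self φ d⟩ : Wc) : Fin (n+1) → ℂ) = ψ d := by
    intro d
    rw [hU, LinearMap.codRestrict_apply, hU1]
  have U_iso : ∀ a b : Wc,
      star ((U a : Fin (n+1) → ℂ)) ⬝ᵥ ((U b : Fin (n+1) → ℂ))
        = star (a : Fin (n+1) → ℂ) ⬝ᵥ (b : Fin (n+1) → ℂ) := by
    intro a b
    obtain ⟨d, hd⟩ := a.2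
    obtain ⟨e, he⟩ := b.2
    have ha : a = ⟨φ d, LinearMap.mem_range_self φ d⟩ := Subtype.ext hd.symm
    have hb : b = ⟨φ e, LinearMap.mem_range_self φ e⟩ := Subtype.ext he.symm
    rw [ha, hb, hUapp, hUapp]
    exact F_iso d e
  -- eigen decomposition
  have hcirc : ∀ (μ : ℂ) (a : Wc), a ≠ 0 → U a = μ • a → (starRingEnd ℂ) μ * μ = 1 := by
    intro μ a ha hUa
    have h1 := U_iso a a
    rw [hUa] at h1
    have hcoe : ((μ • a : Wc) : Fin (n+1) → ℂ) = μ • (a : Fin (n+1) → ℂ) := rfl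
    rw [hcoe, star_smul, smul_dotProduct, dotProduct_smul] at h1
    have hnz : star (a : Fin (n+1) → ℂ) ⬝ᵥ (a : Fin (n+1) → ℂ) ≠ 0 := by
      rw [Ne, dotProduct_star_self_eq_zero]
      intro hz
      exact ha (Subtype.ext hz)
    have h2 : ((starRingEnd ℂ) μ * μ) * (star (a : Fin (n+1) → ℂ) ⬝ᵥ (a : Fin (n+1) → ℂ))
        = 1 * (star (a : Fin (n+1) → ℂ) ⬝ᵥ (a : Fin (n+1) → ℂ)) := by
      rw [one_mul]
      simpa [smul_eq_mul, mul_assoc, RCLike.star_def] using h1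
    exact mul_right_cancel₀ hnz h2
  have hcollapse : ∀ μ : ℂ, U.maxGenEigenspace μ ≤ U.eigenspace μ := by
    intro μ v hv
    rw [Module.End.mem_maxGenEigenspace] at hv
    obtain ⟨k, hk⟩ := hv
    have claim : ∀ (k : ℕ) (a : Wc), ((U - μ • 1)^k) a = 0 → (U - μ • 1) a = 0 := by
      intro k
      induction k with
      | zero =>
        intro a h0
        rw [pow_zero, Module.End.one_apply] at h0
        rw [h0, map_zero]
      | succ k ih =>
        intro a hka
        have hwk : ((U - μ • 1)^k) ((U - μ • 1) a) = 0 := by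
          rw [← Module.End.mul_apply, ← pow_succ]
          exact hka
        have hw1 := ih _ hwk
        set b := (U - μ • 1) a with hb
        by_cases hb0 : b = 0
        · exact hb0
        · exfalso
          have hUb : U b = μ • b := by
            have h5 := hw1
            rwa [LinearMap.sub_apply, LinearMap.smul_apply, Module.End.one_apply,
              sub_eq_zero] at h5
          have hμ1 : (starRingEnd ℂ) μ * μ = 1 := hcirc μ b hb0 hUb
          have hμ0 : μ ≠ 0 := by
            intro h
            rw [h] at hμ1
            simp at hμ1
          have hinv : μ⁻¹ = (starRingEnd ℂ) μ :=
            inv_eq_of_mul_eq_one_left hμ1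
          have hba : (b : Fin (n+1) → ℂ)
              = ((U a : Wc) : Fin (n+1) → ℂ) - μ • (a : Fin (n+1) → ℂ) := by
            rw [hb]
            simp
          have hUv_b : star ((U a : Wc) : Fin (n+1) → ℂ) ⬝ᵥ (b : Fin (n+1) → ℂ)
              = (starRingEnd ℂ) μ * (star (a : Fin (n+1) → ℂ) ⬝ᵥ (b : Fin (n+1) → ℂ)) := by
            have h6 := U_iso a b
            rw [hUb] at h6
            rw [show ((μ • b : Wc) : Fin (n+1) → ℂ) = μ • (b : Fin (n+1) → ℂ) from rfl,
              dotProduct_smul, smul_eq_mul] at h6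
            rw [← hinv, ← h6]
            field_simp
          have key : star (b : Fin (n+1) → ℂ) ⬝ᵥ (b : Fin (n+1) → ℂ) = 0 := by
            have h9 : star (b : Fin (n+1) → ℂ)
                = star ((U a : Wc) : Fin (n+1) → ℂ)
                  - (starRingEnd ℂ) μ • star (a : Fin (n+1) → ℂ) := by
              rw [hba, star_sub, star_smul]
              rfl
            rw [h9, sub_dotProduct, smul_dotProduct, hUv_b, smul_eq_mul]
            ring
          exact hb0 (Subtype.ext (dotProduct_star_self_eq_zero.mp key))
    have h8 := claim k v hk
    rw [Module.End.mem_eigenspace_iff]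
    rwa [LinearMap.sub_apply, LinearMap.smul_apply, Module.End.one_apply, sub_eq_zero] at h8
  have htop2 : ⨆ μ : ℂ, U.eigenspace μ = ⊤ := by
    have htop := Module.End.iSup_maxGenEigenspace_eq_top U
    exact le_antisymm le_top (htop ▸ iSup_mono hcollapse)
  have hx0top : (⟨x 0, hx_mem 0⟩ : Wc) ∈ ⨆ μ : ℂ, U.eigenspace μ := by
    rw [htop2]; exact Submodule.mem_top
  obtain ⟨F, hFmem, hFsum⟩ := (Submodule.mem_iSup_iff_exists_finsupp _ _).mp hx0top
  -- powers
  have hpow : ∀ (m : ℕ) (hm : m < n+1),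
      (⟨x ⟨m, hm⟩, hx_mem _⟩ : Wc) = F.sum (fun μ v => μ^m • v) := by
    intro m
    induction m with
    | zero =>
      intro hm
      have h0 : (⟨x ⟨0, hm⟩, hx_mem _⟩ : Wc) = ⟨x 0, hx_mem 0⟩ := rfl
      rw [h0, ← hFsum]
      apply Finsupp.sum_congr
      intro μ _
      rw [pow_zero, one_smul]
    | succ m ih =>
      intro hm
      have hm' : m < n+1 := by omega
      have hmn : m < n := by omega
      have hsingle_φ : φ (Pi.single ⟨m, hmn⟩ 1) = x ⟨m, hm'⟩ := by
        rw [hφ, Matrix.mulVecLin_apply, Matrix.mulVec_single]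
        funext i
        simp only [Pi.smul_apply, op_smul_eq_mul, Matrix.col_apply, hC1, Matrix.submatrix_apply, id, mul_one, hx]
        congr 1
      have hsingle_ψ : ψ (Pi.single ⟨m, hmn⟩ 1) = x ⟨m+1, hm⟩ := by
        rw [hψ, Matrix.mulVecLin_apply, Matrix.mulVec_single]
        funext i
        simp only [Pi.smul_apply, op_smul_eq_mul, Matrix.col_apply, hC2', Matrix.submatrix_apply, id, mul_one, hx]
        congr 1
      have e2 : U ⟨x ⟨m, hm'⟩, hx_mem _⟩ = ⟨x ⟨m+1, hm⟩, hx_mem _⟩ := by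
        have e1 : (⟨x ⟨m, hm'⟩, hx_mem _⟩ : Wc)
            = ⟨φ (Pi.single ⟨m, hmn⟩ 1), LinearMap.mem_range_self _ _⟩ :=
          Subtype.ext hsingle_φ.symm
        rw [e1]
        apply Subtype.ext
        rw [hUapp, hsingle_ψ]
      rw [← e2, ih hm', map_finsuppSum]
      apply Finsupp.sum_congr
      intro μ hμ
      rw [LinearMap.map_smul, Module.End.mem_eigenspace_iff.mp (hFmem μ), smul_smul, ← pow_succ]
  -- unit circle eigenvalues
  have hsupp_circ : ∀ μ ∈ F.support, ‖(starRingEnd ℂ) μ‖ = 1 := by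
    intro μ hμ
    have hne : F μ ≠ 0 := Finsupp.mem_support_iff.mp hμ
    have hUa : U (F μ) = μ • F μ := Module.End.mem_eigenspace_iff.mp (hFmem μ)
    have h1 := hcirc μ (F μ) hne hUa
    have h2 : (Complex.normSq μ : ℂ) = 1 := by
      rw [← Complex.mul_conj, mul_comm]
      exact h1
    have h3 : Complex.normSq μ = 1 := by exact_mod_cast h2
    rw [Complex.norm_conj, Complex.norm_def, h3, Real.sqrt_one]
  have hfreq : ∀ μ : {μ // μ ∈ F.support}, ∃ f, f ∈ Set.Ico (0:ℝ) 1 ∧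
      Complex.exp (2 * (Real.pi:ℂ) * Complex.I * (f:ℂ)) = (starRingEnd ℂ) μ.1 := by
    intro μ
    obtain ⟨f, hf1, hf2⟩ := exists_freq (hsupp_circ μ.1 μ.2)
    exact ⟨f, hf1, hf2⟩
  choose fr hfr1 hfr2 using hfreq
  set va : Fin (n+1) → ℂ := C *ᵥ w with hva
  have hzi : ∀ i, z i = star (x i) ⬝ᵥ va := by
    intro i
    rw [← hw]
    have step1 : (T *ᵥ w) i = ∑ j, (∑ k, (starRingEnd ℂ) (C k i) * C k j) * w j := by
      simp only [Matrix.mulVec, dotProduct]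
      apply Finset.sum_congr rfl
      intro j _
      congr 1
      rw [e1T]
    rw [step1]
    simp only [dotProduct, Pi.star_apply, hva, Matrix.mulVec, hx, RCLike.star_def]
    simp only [Finset.sum_mul, Finset.mul_sum]
    rw [Finset.sum_comm]
    apply Finset.sum_congr rfl
    intro j _
    apply Finset.sum_congr rfl
    intro k _
    ring
  have xcoe : ∀ i : Fin (n+1),
      x i = ∑ μ ∈ F.support, μ^(i:ℕ) • ((F μ : Wc) : Fin (n+1) → ℂ) := by
    intro i
    have h1 := hpow (i:ℕ) i.isLt
    have h2 := congrArg (Subtype.val) h1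
    simp only [Fin.eta] at h2
    rw [h2, Finsupp.sum]
    simp
  have hzform : ∀ i, z i = ∑ μ ∈ F.support.attach,
      (star ((F μ.1 : Wc) : Fin (n+1) → ℂ) ⬝ᵥ va) * steer (n+1) (fr μ) i := by
    intro i
    rw [hzi, xcoe]
    rw [star_sum, sum_dot]
    rw [← Finset.sum_attach F.support
      (fun μ => star (μ^(i:ℕ) • ((F μ : Wc) : Fin (n+1) → ℂ)) ⬝ᵥ va)]
    apply Finset.sum_congr rfl
    intro μ _
    rw [star_smul, smul_dotProduct, steer_apply, hfr2 μ]
    rw [smul_eq_mul, RCLike.star_def, ← map_pow]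
    ring
  set K := F.support.card with hK
  have hKler : K ≤ r := by
    have hli : LinearIndependent ℂ (fun μ : {μ // μ ∈ F.support} => F μ.1) := by
      apply Module.End.eigenvectors_linearIndependent' U
        (fun μ : {μ // μ ∈ F.support} => μ.1) Subtype.coe_injective
      intro μ
      exact ⟨hFmem μ.1, Finsupp.mem_support_iff.mp μ.2⟩
    have hcard := hli.fintype_card_le_finrank
    rwa [Fintype.card_coe, hfinrank] at hcard
  set e := F.support.equivFin with he
  refine ⟨K, by omega, fun k => fr (e.symm k),
    fun k => star ((F (e.symm k).1 : Wc) : Fin (n+1) → ℂ) ⬝ᵥ va, fun k => hfr1 _, ?_⟩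
  funext i
  rw [hzform i, Finset.sum_apply]
  rw [show (F.support.attach : Finset {μ // μ ∈ F.support}) = Finset.univ from
    (Finset.univ_eq_attach _).symm]
  rw [← Equiv.sum_comp e.symm
    (fun μ => (star ((F μ.1 : Wc) : Fin (n+1) → ℂ) ⬝ᵥ va) * steer (n+1) (fr μ) i)]
  apply Finset.sum_congr rfl
  intro k _
  simp [smul_eq_mul]

lemma toep_shift {N : ℕ} (u : Fin N → ℂ) : ∀ (i j : ℕ) (hi : i + 1 < N) (hj : j + 1 < N),
    Toep u ⟨i+1, hi⟩ ⟨j+1, hj⟩ = Toep u ⟨i, by omega⟩ ⟨j, by omega⟩ := by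
  intro i j hi hj
  simp only [Toep, Matrix.of_apply]
  by_cases h : i ≤ j
  · rw [if_pos (show ((⟨i+1, hi⟩ : Fin N) : ℕ) ≤ ((⟨j+1, hj⟩ : Fin N) : ℕ) by simpa using by omega),
      if_pos (show ((⟨i, by omega⟩ : Fin N) : ℕ) ≤ ((⟨j, by omega⟩ : Fin N) : ℕ) by simpa using h)]
    congr 1
    apply Fin.ext
    simp
  · rw [if_neg (show ¬ ((⟨i+1, hi⟩ : Fin N) : ℕ) ≤ ((⟨j+1, hj⟩ : Fin N) : ℕ) by simpa using by omega),
      if_neg (show ¬ ((⟨i, by omega⟩ : Fin N) : ℕ) ≤ ((⟨j, by omega⟩ : Fin N) : ℕ) by simpa using h)]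
    congr 2
    apply Fin.ext
    simp

lemma smv_toep_psd {N : ℕ} {x : ℝ} {z u : Fin N → ℂ} (h : (smvBlock x z u).PosSemidef) :
    (Toep u).PosSemidef := by
  have h2 := h.submatrix (Sum.inr : Fin N → Fin 1 ⊕ Fin N)
  have h3 : (smvBlock x z u).submatrix (Sum.inr : Fin N → Fin 1 ⊕ Fin N) Sum.inr = Toep u := by
    ext i j
    simp [smvBlock, Matrix.submatrix_apply, Matrix.fromBlocks_apply₂₂]
  rwa [h3] at h2

set_option maxHeartbeats 2000000 in
lemma smv_z_mem {N : ℕ} {x : ℝ} {z u : Fin N → ℂ} (h : (smvBlock x z u).PosSemidef) :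
    ∃ w, (Toep u) *ᵥ w = z := by
  classical
  set M := smvBlock x z u with hM
  obtain ⟨S, hSps, hS2C⟩ : ∃ S : Matrix (Fin 1 ⊕ Fin N) (Fin 1 ⊕ Fin N) ℂ, S.PosSemidef ∧ S * S = M := by
    open scoped MatrixOrder in
    exact ⟨CFC.sqrt M, Matrix.nonneg_iff_posSemidef.mp (CFC.sqrt_nonneg M), CFC.sqrt_mul_sqrt_self M h.nonneg⟩
  have hSH : Sᴴ = S := hSps.1
  have hS2 : S * S = M := hS2C
  set B := S.submatrix (Sum.inr : Fin N → Fin 1 ⊕ Fin N) id with hB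
  have h1 : ∀ (j : Fin N) (p), star (S (Sum.inr j) p) = S p (Sum.inr j) := by
    intro j p
    conv_rhs => rw [← hSH]
    rfl
  have hTB : Toep u = B * Bᴴ := by
    ext i j
    calc Toep u i j = M (Sum.inr i) (Sum.inr j) := by
          rw [hM]; simp [smvBlock, Matrix.fromBlocks_apply₂₂]
      _ = (S * S) (Sum.inr i) (Sum.inr j) := by rw [hS2]
      _ = ∑ p, S (Sum.inr i) p * star (S (Sum.inr j) p) := by
          rw [Matrix.mul_apply]
          exact Finset.sum_congr rfl fun p _ => by rw [h1 j p]
      _ = (B * Bᴴ) i j := by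
          rw [Matrix.mul_apply]
          apply Finset.sum_congr rfl
          intro p _
          rw [hB]
          rfl
  have hzB : B *ᵥ (fun p => S p (Sum.inl 0)) = z := by
    funext i
    calc (B *ᵥ fun p => S p (Sum.inl 0)) i = ∑ p, S (Sum.inr i) p * S p (Sum.inl 0) := by
          simp [Matrix.mulVec, dotProduct, hB]
      _ = (S * S) (Sum.inr i) (Sum.inl 0) := (Matrix.mul_apply).symm
      _ = M (Sum.inr i) (Sum.inl 0) := by rw [hS2]
      _ = z i := by rw [hM]; simp [smvBlock, Matrix.fromBlocks_apply₂₁]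
  have hle : LinearMap.range (Toep u).mulVecLin ≤ LinearMap.range B.mulVecLin := by
    rintro _ ⟨v, rfl⟩
    refine ⟨Bᴴ *ᵥ v, ?_⟩
    rw [Matrix.mulVecLin_apply, Matrix.mulVecLin_apply, Matrix.mulVec_mulVec, ← hTB]
  have hfr : Module.finrank ℂ (LinearMap.range B.mulVecLin)
      ≤ Module.finrank ℂ (LinearMap.range (Toep u).mulVecLin) := by
    have e1 : Module.finrank ℂ (LinearMap.range B.mulVecLin) = B.rank := rfl
    have e2 : Module.finrank ℂ (LinearMap.range (Toep u).mulVecLin) = (Toep u).rank := rfl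
    rw [e1, e2, hTB, Matrix.rank_self_mul_conjTranspose]
  have heq := Submodule.eq_of_le_of_finrank_le hle hfr
  have hzr : z ∈ LinearMap.range B.mulVecLin :=
    ⟨(fun p => S p (Sum.inl 0)), by rw [Matrix.mulVecLin_apply]; exact hzB⟩
  rw [← heq] at hzr
  exact hzr

lemma psd_of_entry_sum {m : Type*} [Fintype m] {K : ℕ} (c : Fin K → ℝ) (hc : ∀ k, 0 ≤ c k)
    (b : Fin K → m → ℂ) :
    Matrix.PosSemidef
      (Matrix.of fun p q : m => ∑ k, (c k : ℂ) * (b k p * (starRingEnd ℂ) (b k q))) := by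
  classical
  set A : Matrix m (Fin K) ℂ := Matrix.of fun p k => ((Real.sqrt (c k) : ℝ) : ℂ) * b k p with hA
  have key : (Matrix.of fun p q : m => ∑ k, (c k : ℂ) * (b k p * (starRingEnd ℂ) (b k q)))
      = A * Aᴴ := by
    ext p q
    rw [Matrix.mul_apply]
    simp only [Matrix.of_apply, Matrix.conjTranspose_apply, hA, RCLike.star_def,
      _root_.map_mul, Complex.conj_ofReal]
    apply Finset.sum_congr rfl
    intro k _
    rw [show ((c k : ℝ) : ℂ) = ((Real.sqrt (c k) : ℝ) : ℂ) * ((Real.sqrt (c k) : ℝ) : ℂ) by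
      rw [← Complex.ofReal_mul, Real.mul_self_sqrt (hc k)]]
    ring
  rw [key]
  exact Matrix.posSemidef_self_mul_conjTranspose _

lemma rank_le_of_span {N K : ℕ} (A : Matrix (Fin N) (Fin N) ℂ) (g : Fin K → Fin N → ℂ)
    (h : ∀ j, (fun i => A i j) ∈ Submodule.span ℂ (Set.range g)) : A.rank ≤ K := by
  classical
  have hr : LinearMap.range A.mulVecLin ≤ Submodule.span ℂ (Set.range g) := by
    rw [Matrix.range_mulVecLin, Submodule.span_le]
    rintro _ ⟨j, rfl⟩
    exact h j
  have hmono := Submodule.finrank_mono hr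
  calc A.rank = Module.finrank ℂ (LinearMap.range A.mulVecLin) := rfl
    _ ≤ Module.finrank ℂ (Submodule.span ℂ (Set.range g)) := hmono
    _ ≤ K := by
        have h2 := finrank_span_le_card (R := ℂ) (Set.range g)
        rw [Set.toFinset_range] at h2
        exact h2.trans ((Finset.card_image_le).trans (by simp))


lemma steer_conj_mul {N : ℕ} (fk : ℝ) (i j : Fin N) (hij : (i:ℕ) ≤ (j:ℕ)) :
    steer N fk i * (starRingEnd ℂ) (steer N fk j)
      = (starRingEnd ℂ) (steer N fk
          ⟨(j:ℕ) - (i:ℕ), Nat.lt_of_le_of_lt (Nat.sub_le _ _) j.isLt⟩) := by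
  simp only [steer]
  rw [← Complex.exp_conj, ← Complex.exp_conj, ← Complex.exp_add]
  congr 1
  have hcast : ((((j:ℕ) - (i:ℕ)) : ℕ) : ℂ) = ((j:ℕ):ℂ) - ((i:ℕ):ℂ) := by
    push_cast [Nat.cast_sub hij]
    ring
  simp only [_root_.map_mul, Complex.conj_I, Complex.conj_ofReal, map_natCast, map_ofNat]
  rw [hcast]
  ring

lemma steer_mul_conj {N : ℕ} (fk : ℝ) (i j : Fin N) (hij : (j:ℕ) ≤ (i:ℕ)) :
    steer N fk i * (starRingEnd ℂ) (steer N fk j)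
      = steer N fk ⟨(i:ℕ) - (j:ℕ), Nat.lt_of_le_of_lt (Nat.sub_le _ _) i.isLt⟩ := by
  simp only [steer]
  rw [← Complex.exp_conj, ← Complex.exp_add]
  congr 1
  have hcast : ((((i:ℕ) - (j:ℕ)) : ℕ) : ℂ) = ((i:ℕ):ℂ) - ((j:ℕ):ℂ) := by
    push_cast [Nat.cast_sub hij]
    ring
  simp only [_root_.map_mul, Complex.conj_I, Complex.conj_ofReal, map_natCast, map_ofNat]
  rw [hcast]
  ring

lemma atomL0_le_rank {N : ℕ} (z u : Fin N → ℂ) (x : ℝ)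
    (h : (smvBlock x z u).PosSemidef) : atomL0 z ≤ (Toep u).rank := by
  obtain ⟨K, hK, f, s, hmem, hsum⟩ :=
    exists_small_decomp (Toep u) (smv_toep_psd h) (toep_shift u) z (smv_z_mem h)
  exact le_trans (Nat.sInf_le ⟨f, s, hmem, hsum⟩) hK

end SMVAux

set_option maxHeartbeats 2000000 in
/-- The atomic ℓ0 norm equals the attained minimum of `rank T(u)` over the
feasible set of the semidefinite program. -/
theorem stmt6 {N : ℕ} (z : Fin N → ℂ) :
    IsLeast {r : ℕ | ∃ (x : ℝ) (u : Fin N → ℂ),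
      (smvBlock x z u).PosSemidef ∧ r = (Toep u).rank} (atomL0 z) := by
  classical
  constructor
  · -- membership
    obtain ⟨f0, s0, hmem0, hsum0⟩ := SMVAux.exists_decomp_card N z
    have hKmem : atomL0 z ∈ {K : ℕ | ∃ (f : Fin K → ℝ) (s : Fin K → ℂ),
        (∀ k, f k ∈ Set.Ico (0 : ℝ) 1) ∧ z = ∑ k, s k • steer N (f k)} :=
      Nat.sInf_mem ⟨N, f0, s0, hmem0, hsum0⟩
    obtain ⟨f, s, hfm, hzd⟩ := hKmem
    set sgn : Fin (atomL0 z) → ℂ :=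
      fun k => if s k = 0 then 1 else s k / (‖s k‖ : ℂ) with hsgn
    have hs_eq : ∀ k, s k = (‖s k‖ : ℂ) * sgn k := by
      intro k
      simp only [hsgn]
      by_cases h : s k = 0
      · simp [h]
      · have ha : (‖s k‖ : ℂ) ≠ 0 := by
          simp only [Ne, Complex.ofReal_eq_zero]
          exact fun hz => h ((norm_eq_zero).mp hz)
        rw [if_neg h]
        field_simp
    have hsgn_unit : ∀ k, (starRingEnd ℂ) (sgn k) * sgn k = 1 := by
      intro k
      simp only [hsgn]
      by_cases h : s k = 0
      · simp [h]
      · have ha : (‖s k‖ : ℂ) ≠ 0 := by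
          simp only [Ne, Complex.ofReal_eq_zero]
          exact fun hz => h ((norm_eq_zero).mp hz)
        rw [if_neg h, map_div₀, Complex.conj_ofReal, div_mul_div_comm,
          mul_comm ((starRingEnd ℂ) (s k)) (s k), Complex.mul_conj, ← Complex.sq_norm]
        rw [Complex.ofReal_pow, sq]
        exact div_self (mul_ne_zero ha ha)
    set c : Fin (atomL0 z) → ℝ := fun k => ‖s k‖ with hcdef
    set b : Fin (atomL0 z) → (Fin 1 ⊕ Fin N) → ℂ :=
      fun k => Sum.elim (fun _ => (starRingEnd ℂ) (sgn k)) (steer N (f k)) with hb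
    set x₀ : ℝ := ∑ k, ‖s k‖ with hx₀
    set u₀ : Fin N → ℂ :=
      fun d => ∑ k, (‖s k‖ : ℂ) * (starRingEnd ℂ) (steer N (f k) d) with hu₀
    have hzk : ∀ i, z i = ∑ k, s k * steer N (f k) i := by
      intro i
      rw [congrFun hzd i, Finset.sum_apply]
      apply Finset.sum_congr rfl
      intro k _
      rfl
    have hMeq : smvBlock x₀ z u₀
        = Matrix.of fun p q : Fin 1 ⊕ Fin N =>
            ∑ k, (c k : ℂ) * (b k p * (starRingEnd ℂ) (b k q)) := by
      ext p q
      rcases p with p | i <;> rcases q with q | j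
      · -- (inl, inl)
        show (x₀ : ℂ) = _
        simp only [Matrix.of_apply, hb, Sum.elim_inl, Complex.conj_conj]
        rw [hx₀, Complex.ofReal_sum]
        apply Finset.sum_congr rfl
        intro k _
        rw [hsgn_unit k, mul_one]
      · -- (inl, inr)
        show (starRingEnd ℂ) (z j) = _
        simp only [Matrix.of_apply, hb, Sum.elim_inl, Sum.elim_inr]
        rw [hzk j, map_sum]
        apply Finset.sum_congr rfl
        intro k _
        rw [hs_eq k]
        simp only [_root_.map_mul, Complex.conj_ofReal]
        ring
      · -- (inr, inl)
        show z i = _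
        simp only [Matrix.of_apply, hb, Sum.elim_inl, Sum.elim_inr, Complex.conj_conj]
        rw [hzk i]
        apply Finset.sum_congr rfl
        intro k _
        rw [hs_eq k]
        ring
      · -- (inr, inr)
        show Toep u₀ i j = _
        simp only [Matrix.of_apply, hb, Sum.elim_inr]
        by_cases hij : (i:ℕ) ≤ (j:ℕ)
        · rw [Toep, Matrix.of_apply, if_pos hij, hu₀]
          apply Finset.sum_congr rfl
          intro k _
          rw [← SMVAux.steer_conj_mul (f k) i j hij]
        · rw [Toep, Matrix.of_apply, if_neg hij, hu₀]
          rw [RCLike.star_def, map_sum]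
          apply Finset.sum_congr rfl
          intro k _
          simp only [_root_.map_mul, Complex.conj_ofReal, Complex.conj_conj]
          rw [SMVAux.steer_mul_conj (f k) i j (by omega)]
    have hpsd : (smvBlock x₀ z u₀).PosSemidef := by
      rw [hMeq]
      exact SMVAux.psd_of_entry_sum c (fun k => norm_nonneg _) b
    have hcol : ∀ j, (fun i => Toep u₀ i j)
        ∈ Submodule.span ℂ (Set.range (fun k => steer N (f k))) := by
      intro j
      have hcoleq : (fun i => Toep u₀ i j)
          = ∑ k, ((c k : ℂ) * (starRingEnd ℂ) (steer N (f k) j)) • steer N (f k) := by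
        funext i
        have h1 : Toep u₀ i j = (smvBlock x₀ z u₀) (Sum.inr i) (Sum.inr j) := by
          simp [smvBlock, Matrix.fromBlocks_apply₂₂]
        rw [h1, hMeq]
        simp only [Matrix.of_apply, hb, Sum.elim_inr, Finset.sum_apply, Pi.smul_apply,
          smul_eq_mul]
        apply Finset.sum_congr rfl
        intro k _
        ring
      rw [hcoleq]
      exact Submodule.sum_mem _ fun k _ =>
        Submodule.smul_mem _ _ (Submodule.subset_span ⟨k, rfl⟩)
    have hrank_le : (Toep u₀).rank ≤ atomL0 z :=
      SMVAux.rank_le_of_span (Toep u₀) (fun k => steer N (f k)) hcol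
    have hrank_ge : atomL0 z ≤ (Toep u₀).rank := SMVAux.atomL0_le_rank z u₀ x₀ hpsd
    exact ⟨x₀, u₀, hpsd, le_antisymm hrank_ge hrank_le⟩
  · rintro r ⟨x, u, hpsd, rfl⟩
    exact SMVAux.atomL0_le_rank z u x hpsd
end

section
/- For every z ∈ ℂ^N and all m, n ≥ 1 with m + n = N + 1, one has ‖z‖_{𝒜',0} ≥ rank(H(z)), where H(z) is the m×n Hankel matrix built from z. -/
open Matrix

/-- The atom `a'(φ) = (1, φ, φ², …, φ^{N−1})ᵀ`. -/
noncomputable def powVec (N : ℕ) (φ : ℂ) : Fin N → ℂ := fun j => φ ^ (j : ℕ)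

/-- The atomic ℓ0 norm of `z ∈ ℂ^N` with respect to the atom set
`𝒜' = {a'(φ) : φ ∈ ℂ}`. -/
noncomputable def atomL0' {N : ℕ} (z : Fin N → ℂ) : ℕ :=
  sInf {K : ℕ | ∃ (φ : Fin K → ℂ) (s : Fin K → ℂ), z = ∑ k, s k • powVec N (φ k)}

/-- The `m × n` Hankel matrix built from `z ∈ ℂ^N`, where `m + n = N + 1`. -/
noncomputable def hankel {N m n : ℕ} (h : m + n = N + 1) (z : Fin N → ℂ) :
    Matrix (Fin m) (Fin n) ℂ :=
  Matrix.of fun j k => z ⟨(j : ℕ) + (k : ℕ), by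
    have hj := j.isLt; have hk := k.isLt; omega⟩

/-- The atomic ℓ0 norm w.r.t. `𝒜'` dominates the rank of the Hankel matrix. -/
theorem stmt10 {N m n : ℕ} (hm : 1 ≤ m) (hn : 1 ≤ n) (h : m + n = N + 1)
    (z : Fin N → ℂ) :
    (hankel h z).rank ≤ atomL0' z := by
  have hne : {K : ℕ | ∃ (φ : Fin K → ℂ) (s : Fin K → ℂ),
      z = ∑ k, s k • powVec N (φ k)}.Nonempty := by
    refine ⟨N, fun j => (j : ℂ), ?_⟩
    set v : Fin N → ℂ := fun j => (j : ℂ) with hv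
    have hinj : Function.Injective v := by
      intro a b hab
      have : ((a : ℕ) : ℂ) = ((b : ℕ) : ℂ) := hab
      exact Fin.ext (Nat.cast_injective this)
    have hdet : (Matrix.vandermonde v).det ≠ 0 :=
      Matrix.det_vandermonde_ne_zero_iff.mpr hinj
    have hdetT : IsUnit ((Matrix.vandermonde v)ᵀ.det) := by
      rw [Matrix.det_transpose]; exact Ne.isUnit hdet
    set A := (Matrix.vandermonde v)ᵀ
    refine ⟨A⁻¹.mulVec z, ?_⟩
    have : A.mulVec (A⁻¹.mulVec z) = z := by
      rw [Matrix.mulVec_mulVec, Matrix.mul_nonsing_inv _ hdetT, Matrix.one_mulVec]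
    funext j
    calc z j = A.mulVec (A⁻¹.mulVec z) j := by rw [this]
    _ = ∑ k, v k ^ (j : ℕ) * A⁻¹.mulVec z k := by
        simp [Matrix.mulVec, dotProduct, A, Matrix.vandermonde]
    _ = (∑ k, A⁻¹.mulVec z k • powVec N (v k)) j := by
        simp [powVec, Finset.sum_apply, mul_comm]
  obtain ⟨φ, s, hz⟩ := Nat.sInf_mem hne
  set K := atomL0' z
  set A : Matrix (Fin m) (Fin K) ℂ := Matrix.of fun i k => s k * φ k ^ (i : ℕ)
  set B : Matrix (Fin K) (Fin n) ℂ := Matrix.of fun k j => φ k ^ (j : ℕ)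
  have hAB : hankel h z = A * B := by
    ext i j
    simp only [hankel, Matrix.of_apply, hz, Finset.sum_apply, Pi.smul_apply,
      smul_eq_mul, powVec, Matrix.mul_apply, A, B]
    refine Finset.sum_congr rfl fun k _ => ?_
    rw [pow_add]; ring
  calc (hankel h z).rank = (A * B).rank := by rw [hAB]
  _ ≤ B.rank := Matrix.rank_mul_le_right A B
  _ ≤ Fintype.card (Fin K) := Matrix.rank_le_card_height B
  _ = K := Fintype.card_fin K
end

section
/- Fix Ω ⊆ {0,…,N−1} of cardinality M, data Y_Ω ∈ ℂ^{M×L}, η ≥ 0 and λ' > 0, and consider the following three optimization problems over (X, u, Z) with X ∈ ℂ^{L×L} Hermitian, u ∈ ℂ^N, Z ∈ ℂ^{N×L}, all subject to the (L+N)×(L+N) block matrix [[X, Z^H],[Z, T(u)]] being positive semidefinite: (P1) minimize tr(X) + tr(T(u)) subject to ‖Z_Ω − Y_Ω‖_F ≤ η; (P2) minimize λ'·tr(X) + λ'·tr(T(u)) + ‖Z_Ω − Y_Ω‖_F²; (P3) minimize tr(X) + tr(T(u)) subject to Z_Ω = Y_Ω. Let Ỹ_Ω ∈ ℂ^{M×L'}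 satisfy Ỹ_Ω·(Ỹ_Ω)^H = Y_Ω·(Y_Ω)^H, and let (P̃1), (P̃2), (P̃3) denote the same problems with Y_Ω replaced by Ỹ_Ω (with Z ∈ ℂ^{N×L'} and X ∈ ℂ^{L'×L'}). Then for each i ∈ {1,2,3}, a vector u ∈ ℂ^N belongs to some optimal solution of (Pi) if and only if it belongs to some optimal solution of (P̃i). Moreover, if Q ∈ ℂ^{L×L'} satisfies Q^H Q = I_{L'} and Ỹ_Ω = Y_Ω·Q, and (X̂, û, Ẑ) is an optimal solution of (P̃i), then (Q·X̂·Q^H, û, Ẑ·Q^H) is an optimal solution of (Pi). -/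
open Matrix
open scoped ComplexOrder

/-- The Frobenius norm of a complex matrix. -/
noncomputable def frob {m n : Type*} [Fintype m] [Fintype n] (A : Matrix m n ℂ) : ℝ :=
  Real.sqrt (∑ i, ∑ j, Complex.normSq (A i j))

/-- The submatrix of rows indexed by `Ω`. -/
noncomputable def rowsOn {N : ℕ} (Ω : Finset (Fin N)) {L : ℕ}
    (Z : Matrix (Fin N) (Fin L) ℂ) : Matrix {x // x ∈ Ω} (Fin L) ℂ :=
  Matrix.of fun i l => Z i.1 l

/-- The common semidefinite feasibility constraint. -/
def sdpFeas {N L : ℕ} (X : Matrix (Fin L) (Fin L) ℂ) (u : Fin N → ℂ)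
    (Z : Matrix (Fin N) (Fin L) ℂ) : Prop :=
  X.IsHermitian ∧ (Matrix.fromBlocks X Zᴴ Z (Toep u)).PosSemidef

/-- The trace objective `tr X + tr T(u)` (both traces are real on the feasible set). -/
noncomputable def objTr {N L : ℕ} (X : Matrix (Fin L) (Fin L) ℂ) (u : Fin N → ℂ) : ℝ :=
  X.trace.re + (Toep u).trace.re

/-- Feasibility for problem `i ∈ {0,1,2}` (corresponding to (P1), (P2), (P3)). -/
noncomputable def pFeas {N L : ℕ} (Ω : Finset (Fin N)) (Y : Matrix {x // x ∈ Ω} (Fin L) ℂ)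
    (η : ℝ) (i : Fin 3) (X : Matrix (Fin L) (Fin L) ℂ) (u : Fin N → ℂ)
    (Z : Matrix (Fin N) (Fin L) ℂ) : Prop :=
  sdpFeas X u Z ∧ (i = 0 → frob (rowsOn Ω Z - Y) ≤ η) ∧ (i = 2 → rowsOn Ω Z = Y)

/-- Objective for problem `i ∈ {0,1,2}` (corresponding to (P1), (P2), (P3)). -/
noncomputable def pObj {N L : ℕ} (Ω : Finset (Fin N)) (Y : Matrix {x // x ∈ Ω} (Fin L) ℂ)
    (lam : ℝ) (i : Fin 3) (X : Matrix (Fin L) (Fin L) ℂ) (u : Fin N → ℂ)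
    (Z : Matrix (Fin N) (Fin L) ℂ) : ℝ :=
  if i = 1 then lam * objTr X u + (frob (rowsOn Ω Z - Y)) ^ 2 else objTr X u

/-- `(X, u, Z)` is an optimal solution of problem `i`. -/
noncomputable def isOpt {N L : ℕ} (Ω : Finset (Fin N)) (Y : Matrix {x // x ∈ Ω} (Fin L) ℂ)
    (η lam : ℝ) (i : Fin 3) (X : Matrix (Fin L) (Fin L) ℂ) (u : Fin N → ℂ)
    (Z : Matrix (Fin N) (Fin L) ℂ) : Prop :=
  pFeas Ω Y η i X u Z ∧
    ∀ X' u' Z', pFeas Ω Y η i X' u' Z' → pObj Ω Y lam i X u Z ≤ pObj Ω Y lam i X' u' Z'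

lemma quadform_eq {a b : ℕ} (D : Matrix (Fin a) (Fin b) ℂ) (x : Fin a → ℂ) :
    star x ⬝ᵥ ((1 - D * Dᴴ) *ᵥ x)
      = ((∑ i, Complex.normSq (x i) - ∑ j, Complex.normSq ((star x ᵥ* D) j) : ℝ) : ℂ) := by
  have e0 : Dᴴ *ᵥ x = star (star x ᵥ* D) := by rw [star_vecMul, star_star]
  rw [sub_mulVec, one_mulVec, dotProduct_sub, ← mulVec_mulVec, e0, dotProduct_mulVec]
  have e1 : star x ⬝ᵥ x = ((∑ i, Complex.normSq (x i) : ℝ) : ℂ) := by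
    push_cast
    simp [dotProduct, Complex.normSq_eq_conj_mul_self, Complex.star_def]
  have e2 : (star x ᵥ* D) ⬝ᵥ star (star x ᵥ* D)
      = ((∑ j, Complex.normSq ((star x ᵥ* D) j) : ℝ) : ℂ) := by
    push_cast
    simp [dotProduct, Complex.normSq_eq_conj_mul_self, Complex.star_def, mul_comm]
  rw [e1, e2, Complex.ofReal_sub]

lemma contraction_vecMul_le {a b : ℕ} {D : Matrix (Fin a) (Fin b) ℂ}
    (hc : ((1 : Matrix (Fin a) (Fin a) ℂ) - D * Dᴴ).PosSemidef) (v : Fin a → ℂ) :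
    ∑ j, Complex.normSq ((v ᵥ* D) j) ≤ ∑ i, Complex.normSq (v i) := by
  have h := hc.dotProduct_mulVec_nonneg (star v)
  rw [quadform_eq, star_star, Complex.zero_le_real] at h
  have h1 : ∑ i, Complex.normSq (star v i) = ∑ i, Complex.normSq (v i) := by
    refine Finset.sum_congr rfl fun i _ => ?_
    simp [Complex.normSq_conj, Complex.star_def]
  rw [h1] at h
  linarith

lemma frob_mul_le {m : Type*} [Fintype m] {a b : ℕ} {D : Matrix (Fin a) (Fin b) ℂ}
    (hc : ((1 : Matrix (Fin a) (Fin a) ℂ) - D * Dᴴ).PosSemidef) (A : Matrix m (Fin a) ℂ) :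
    frob (A * D) ≤ frob A := by
  apply Real.sqrt_le_sqrt
  refine Finset.sum_le_sum fun i _ => ?_
  have h := contraction_vecMul_le hc (A i)
  have e : ∀ j, (A * D) i j = (A i ᵥ* D) j := by
    intro j; simp [Matrix.mul_apply, Matrix.vecMul, dotProduct]
  calc ∑ j, Complex.normSq ((A * D) i j) = ∑ j, Complex.normSq ((A i ᵥ* D) j) := by
        exact Finset.sum_congr rfl fun j _ => by rw [e]
    _ ≤ ∑ j, Complex.normSq (A i j) := h

lemma re_trace_conjTranspose_mul_self {m : Type*} [Fintype m] {n : Type*} [Fintype n]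
    (A : Matrix m n ℂ) : ((Aᴴ * A).trace).re = ∑ i, ∑ j, Complex.normSq (A i j) := by
  have : (Aᴴ * A).trace = ((∑ i, ∑ j, Complex.normSq (A i j) : ℝ) : ℂ) := by
    push_cast
    rw [Matrix.trace]
    simp only [Matrix.diag, Matrix.mul_apply, Matrix.conjTranspose_apply,
      Complex.star_def, Complex.normSq_eq_conj_mul_self]
    rw [Finset.sum_comm]
  rw [this, Complex.ofReal_re]

lemma re_trace_conj_le {a b : ℕ} {X : Matrix (Fin a) (Fin a) ℂ} (hX : X.PosSemidef)
    {D : Matrix (Fin a) (Fin b) ℂ}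
    (hc : ((1 : Matrix (Fin a) (Fin a) ℂ) - D * Dᴴ).PosSemidef) :
    ((Dᴴ * X * D).trace).re ≤ (X.trace).re := by
  obtain ⟨B, rfl⟩ : ∃ B : Matrix (Fin a) (Fin a) ℂ, X = Bᴴ * B := by
    classical
    open MatrixOrder in
    obtain ⟨B, hB, -, rfl⟩ := CFC.exists_sqrt_of_isSelfAdjoint_of_quasispectrumRestricts
      hX.isHermitian (QuasispectrumRestricts.nnreal_of_nonneg hX.nonneg)
    exact ⟨B, by rw [show Bᴴ = B from hB.star_eq]⟩
  have e : Dᴴ * (Bᴴ * B) * D = (B * D)ᴴ * (B * D) := by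
    rw [Matrix.conjTranspose_mul]
    simp only [Matrix.mul_assoc]
  rw [e, re_trace_conjTranspose_mul_self, re_trace_conjTranspose_mul_self]
  refine Finset.sum_le_sum fun k _ => ?_
  have h := contraction_vecMul_le hc (B k)
  have e2 : ∀ j, (B * D) k j = (B k ᵥ* D) j := by
    intro j; simp [Matrix.mul_apply, Matrix.vecMul, dotProduct]
  calc ∑ j, Complex.normSq ((B * D) k j) = ∑ j, Complex.normSq ((B k ᵥ* D) j) :=
        Finset.sum_congr rfl fun j _ => by rw [e2]
    _ ≤ ∑ j, Complex.normSq (B k j) := h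

lemma posSemidef_of_sdpFeas {N L : ℕ} {X : Matrix (Fin L) (Fin L) ℂ} {u : Fin N → ℂ}
    {Z : Matrix (Fin N) (Fin L) ℂ} (hs : sdpFeas X u Z) : X.PosSemidef := by
  have h := hs.2.submatrix (Sum.inl : Fin L → Fin L ⊕ Fin N)
  have e : (Matrix.fromBlocks X Zᴴ Z (Toep u)).submatrix Sum.inl Sum.inl = X := rfl
  rwa [e] at h

lemma sdpFeas_mul {N a b : ℕ} {X : Matrix (Fin a) (Fin a) ℂ} {u : Fin N → ℂ}
    {Z : Matrix (Fin N) (Fin a) ℂ} (hs : sdpFeas X u Z) (D : Matrix (Fin a) (Fin b) ℂ) :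
    sdpFeas (Dᴴ * X * D) u (Z * D) := by
  refine ⟨Matrix.isHermitian_conjTranspose_mul_mul D hs.1, ?_⟩
  have h := hs.2.conjTranspose_mul_mul_same
    (Matrix.fromBlocks D 0 0 (1 : Matrix (Fin N) (Fin N) ℂ))
  have e : (Matrix.fromBlocks D 0 0 (1 : Matrix (Fin N) (Fin N) ℂ))ᴴ *
      Matrix.fromBlocks X Zᴴ Z (Toep u) *
      Matrix.fromBlocks D 0 0 (1 : Matrix (Fin N) (Fin N) ℂ)
      = Matrix.fromBlocks (Dᴴ * X * D) (Z * D)ᴴ (Z * D) (Toep u) := by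
    simp [Matrix.fromBlocks_conjTranspose, Matrix.fromBlocks_multiply, Matrix.conjTranspose_mul,
      Matrix.mul_assoc]
  rwa [e] at h

lemma rowsOn_mul {N a b : ℕ} (Ω : Finset (Fin N)) (Z : Matrix (Fin N) (Fin a) ℂ)
    (D : Matrix (Fin a) (Fin b) ℂ) : rowsOn Ω (Z * D) = rowsOn Ω Z * D := rfl

lemma exists_contraction {m : Type*} [Fintype m] [DecidableEq m] {a b : ℕ}
    (A : Matrix m (Fin a) ℂ) (B : Matrix m (Fin b) ℂ)
    (h : A * Aᴴ = B * Bᴴ) :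
    ∃ D : Matrix (Fin a) (Fin b) ℂ, A * D = B ∧ ((1 : Matrix (Fin a) (Fin a) ℂ) - D * Dᴴ).PosSemidef := by
  classical
  let evV : (Fin a → ℂ) ≃ₗ[ℂ] EuclideanSpace ℂ (Fin a) := (WithLp.linearEquiv 2 ℂ (Fin a → ℂ)).symm
  let evW : (Fin b → ℂ) ≃ₗ[ℂ] EuclideanSpace ℂ (Fin b) := (WithLp.linearEquiv 2 ℂ (Fin b → ℂ)).symm
  let φ : (m → ℂ) →ₗ[ℂ] EuclideanSpace ℂ (Fin a) := evV.toLinearMap ∘ₗ A.vecMulLinear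
  let ψ : (m → ℂ) →ₗ[ℂ] EuclideanSpace ℂ (Fin b) := evW.toLinearMap ∘ₗ B.vecMulLinear
  have φ_apply : ∀ (x : m → ℂ) (j : Fin a), φ x j = (x ᵥ* A) j := fun x j => rfl
  have ψ_apply : ∀ (x : m → ℂ) (j : Fin b), ψ x j = (x ᵥ* B) j := fun x j => rfl
  -- equality of inner products
  have dot_eq : ∀ {k : ℕ} (M : Matrix m (Fin k) ℂ) (x : m → ℂ),
      star (x ᵥ* M) ⬝ᵥ (x ᵥ* M) = x ⬝ᵥ ((M * Mᴴ) *ᵥ star x) := by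
    intro k M x
    rw [dotProduct_comm, star_vecMul, ← mulVec_mulVec, dotProduct_mulVec, dotProduct_mulVec, dotProduct_mulVec]
  have hnorm : ∀ x : m → ℂ, ‖φ x‖ = ‖ψ x‖ := by
    have hinner : ∀ x : m → ℂ, (inner ℂ (φ x) (φ x) : ℂ) = inner ℂ (ψ x) (ψ x) := by
      intro x
      have h1 : (inner ℂ (φ x) (φ x) : ℂ) = star (x ᵥ* A) ⬝ᵥ (x ᵥ* A) :=
        by rw [dotProduct_comm]; exact EuclideanSpace.inner_toLp_toLp (x ᵥ* A) (x ᵥ* A)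
      have h2 : (inner ℂ (ψ x) (ψ x) : ℂ) = star (x ᵥ* B) ⬝ᵥ (x ᵥ* B) :=
        by rw [dotProduct_comm]; exact EuclideanSpace.inner_toLp_toLp (x ᵥ* B) (x ᵥ* B)
      rw [h1, h2, dot_eq, dot_eq, h]
    intro x
    have := hinner x
    rw [inner_self_eq_norm_sq_to_K, inner_self_eq_norm_sq_to_K] at this
    have h2 : ‖φ x‖ ^ 2 = ‖ψ x‖ ^ 2 := by exact_mod_cast this
    nlinarith [norm_nonneg (φ x), norm_nonneg (ψ x)]
  -- kernel inclusion
  have hker : LinearMap.ker φ ≤ LinearMap.ker ψ := by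
    intro x hx
    rw [LinearMap.mem_ker] at hx ⊢
    have := hnorm x
    rw [hx, norm_zero] at this
    exact (norm_eq_zero.mp this.symm)
  set K := LinearMap.range φ with hK
  haveI : CompleteSpace K := FiniteDimensional.complete ℂ K
  let ψ' := (LinearMap.ker φ).liftQ ψ hker
  let E₀ : K →ₗ[ℂ] EuclideanSpace ℂ (Fin b) := ψ' ∘ₗ (φ.quotKerEquivRange.symm : K ≃ₗ[ℂ] _).toLinearMap
  have hE₀ : ∀ (x : m → ℂ) (hx : φ x ∈ K), E₀ ⟨φ x, hx⟩ = ψ x := by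
    intro x hx
    have h1 : φ.quotKerEquivRange.symm ⟨φ x, hx⟩ = (LinearMap.ker φ).mkQ x :=
      φ.quotKerEquivRange_symm_apply_image x hx
    show ψ' (φ.quotKerEquivRange.symm ⟨φ x, hx⟩) = ψ x
    rw [h1]
    rfl
  let P := K.orthogonalProjectionOnto
  let E : EuclideanSpace ℂ (Fin a) →ₗ[ℂ] EuclideanSpace ℂ (Fin b) := E₀ ∘ₗ P.toLinearMap
  have hEφ : ∀ x : m → ℂ, E (φ x) = ψ x := by
    intro x
    have hmem : φ x ∈ K := LinearMap.mem_range_self φ x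
    have hP : P (φ x) = ⟨φ x, hmem⟩ := by
      apply Subtype.ext
      exact K.starProjection_eq_self_iff.mpr hmem
    show E₀ (P (φ x)) = ψ x
    rw [hP, hE₀]
  have hEnorm : ∀ v, ‖E v‖ ≤ ‖v‖ := by
    intro v
    have h1 : ‖E v‖ = ‖(P v : EuclideanSpace ℂ (Fin a))‖ := by
      obtain ⟨x, hx⟩ := (P v).2
      have hw : P v = ⟨φ x, by rw [hx]; exact (P v).2⟩ := Subtype.ext hx.symm
      show ‖E₀ (P v)‖ = _
      rw [hw, hE₀, ← hnorm]
    rw [h1]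
    calc ‖(P v : EuclideanSpace ℂ (Fin a))‖ = ‖P v‖ := rfl
      _ ≤ ‖P‖ * ‖v‖ := P.le_opNorm v
      _ ≤ 1 * ‖v‖ := mul_le_mul_of_nonneg_right K.orthogonalProjectionOnto_norm_le (norm_nonneg v)
      _ = ‖v‖ := one_mul _
  -- the matrix
  let F : (Fin a → ℂ) →ₗ[ℂ] (Fin b → ℂ) := evW.symm.toLinearMap ∘ₗ E ∘ₗ evV.toLinearMap
  let D : Matrix (Fin a) (Fin b) ℂ := Matrix.of fun i j => F (Pi.single i 1) j
  have hF : ∀ v : Fin a → ℂ, v ᵥ* D = F v := by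
    intro v
    have hv : v = ∑ i, v i • (Pi.single i (1:ℂ) : Fin a → ℂ) := by
      funext k
      simp [Finset.sum_apply, Pi.single_apply]
    funext j
    have h1 : (v ᵥ* D) j = ∑ i, v i * F (Pi.single i 1) j := by
      simp [Matrix.vecMul, dotProduct, D]
    rw [h1]
    conv_rhs => rw [hv, map_sum]
    simp [Finset.sum_apply]
  have hAD : A * D = B := by
    ext k j
    have h0 : A k = Pi.single k (1:ℂ) ᵥ* A := (Matrix.single_one_vecMul k A).symm
    have h1 : (A * D) k j = (A k ᵥ* D) j := by
      simp [Matrix.mul_apply, Matrix.vecMul, dotProduct]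
    rw [h1, hF]
    have h2 : F (A k) = Pi.single k (1:ℂ) ᵥ* B := by
      have : evV (A k) = φ (Pi.single k 1) := by
        show evV (A k) = evV (Pi.single k (1:ℂ) ᵥ* A)
        rw [← h0]
      show evW.symm (E (evV (A k))) = _
      rw [this, hEφ]
      rfl
    rw [h2, Matrix.single_one_vecMul]; rfl
  -- the contraction bound
  have key : ∀ v : Fin a → ℂ, ∑ j, Complex.normSq ((v ᵥ* D) j) ≤ ∑ i, Complex.normSq (v i) := by
    intro v
    have h1 : ∑ j, Complex.normSq ((v ᵥ* D) j) = ‖E (evV v)‖ ^ 2 := by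
      rw [hF]
      have : ∀ j, F v j = E (evV v) j := fun j => rfl
      rw [EuclideanSpace.norm_eq, Real.sq_sqrt (Finset.sum_nonneg fun j _ => sq_nonneg _)]
      refine Finset.sum_congr rfl fun j _ => ?_
      rw [this j, ← Complex.sq_norm]
    have h2 : ∑ i, Complex.normSq (v i) = ‖evV v‖ ^ 2 := by
      rw [EuclideanSpace.norm_eq, Real.sq_sqrt (Finset.sum_nonneg fun j _ => sq_nonneg _)]
      refine Finset.sum_congr rfl fun j _ => ?_
      rw [← Complex.sq_norm]
      rfl
    rw [h1, h2]
    have := hEnorm (evV v)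
    nlinarith [norm_nonneg (E (evV v)), norm_nonneg (evV v)]
  refine ⟨D, hAD, Matrix.PosSemidef.of_dotProduct_mulVec_nonneg ?_ ?_⟩
  · show (1 - D * Dᴴ)ᴴ = 1 - D * Dᴴ
    simp
  · intro x
    rw [quadform_eq]
    rw [Complex.zero_le_real]
    have h1 : ∑ i, Complex.normSq (star x i) = ∑ i, Complex.normSq (x i) := by
      refine Finset.sum_congr rfl fun i _ => ?_
      simp [Complex.normSq_conj, Complex.star_def]
    have := key (star x)
    rw [h1] at this
    linarith


lemma transfer {N a b : ℕ} (Ω : Finset (Fin N)) (Y : Matrix {x // x ∈ Ω} (Fin b) ℂ)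
    (Yt : Matrix {x // x ∈ Ω} (Fin a) ℂ) (η lam : ℝ) (hlam : 0 < lam) (i : Fin 3)
    {D : Matrix (Fin a) (Fin b) ℂ} (hD : Yt * D = Y)
    (hc : ((1 : Matrix (Fin a) (Fin a) ℂ) - D * Dᴴ).PosSemidef)
    {X : Matrix (Fin a) (Fin a) ℂ} {u : Fin N → ℂ} {Z : Matrix (Fin N) (Fin a) ℂ}
    (hf : pFeas Ω Yt η i X u Z) :
    pFeas Ω Y η i (Dᴴ * X * D) u (Z * D) ∧
      pObj Ω Y lam i (Dᴴ * X * D) u (Z * D) ≤ pObj Ω Yt lam i X u Z := by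
  obtain ⟨hs, h0, h2⟩ := hf
  have hrow : rowsOn Ω (Z * D) - Y = (rowsOn Ω Z - Yt) * D := by
    rw [rowsOn_mul, ← hD, Matrix.sub_mul]
  have hfro : frob (rowsOn Ω (Z * D) - Y) ≤ frob (rowsOn Ω Z - Yt) := by
    rw [hrow]; exact frob_mul_le hc _
  have hobj : objTr (Dᴴ * X * D) u ≤ objTr X u := by
    unfold objTr
    have := re_trace_conj_le (posSemidef_of_sdpFeas hs) hc
    linarith
  refine ⟨⟨sdpFeas_mul hs D, fun hi => le_trans hfro (h0 hi), fun hi => ?_⟩, ?_⟩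
  · rw [rowsOn_mul, h2 hi, hD]
  · by_cases hi : i = 1
    · simp only [pObj, if_pos hi]
      refine add_le_add (mul_le_mul_of_nonneg_left hobj hlam.le) ?_
      exact pow_le_pow_left₀ (Real.sqrt_nonneg _) hfro 2
    · simp only [pObj, if_neg hi]
      exact hobj

lemma opt_transfer {N a b : ℕ} (Ω : Finset (Fin N)) (Y : Matrix {x // x ∈ Ω} (Fin b) ℂ)
    (Yt : Matrix {x // x ∈ Ω} (Fin a) ℂ) (η lam : ℝ) (hlam : 0 < lam) (i : Fin 3)
    {D : Matrix (Fin a) (Fin b) ℂ} (hD : Yt * D = Y)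
    (hc : ((1 : Matrix (Fin a) (Fin a) ℂ) - D * Dᴴ).PosSemidef)
    {D' : Matrix (Fin b) (Fin a) ℂ} (hD' : Y * D' = Yt)
    (hc' : ((1 : Matrix (Fin b) (Fin b) ℂ) - D' * D'ᴴ).PosSemidef)
    {X : Matrix (Fin a) (Fin a) ℂ} {u : Fin N → ℂ} {Z : Matrix (Fin N) (Fin a) ℂ}
    (hopt : isOpt Ω Yt η lam i X u Z) :
    isOpt Ω Y η lam i (Dᴴ * X * D) u (Z * D) := by
  obtain ⟨hf, hmin⟩ := hopt
  obtain ⟨hf2, hle⟩ := transfer Ω Y Yt η lam hlam i hD hc hf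
  refine ⟨hf2, fun X' u' Z' hf' => ?_⟩
  obtain ⟨hf3, hle3⟩ := transfer Ω Yt Y η lam hlam i hD' hc' hf'
  exact le_trans hle (le_trans (hmin _ _ _ hf3) hle3)

/-- Dimensionality reduction for the three atomic-norm SDPs: replacing the data
`Y_Ω` by any `Ỹ_Ω` with the same outer product `Ỹ_Ω Ỹ_Ωᴴ = Y_Ω Y_Ωᴴ` preserves the
set of optimal `u`, and solutions transform via any isometry `Q` with `Ỹ_Ω = Y_Ω Q`. -/
theorem stmt19 {N L L' : ℕ} (Ω : Finset (Fin N))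
    (Y : Matrix {x // x ∈ Ω} (Fin L) ℂ) (Yt : Matrix {x // x ∈ Ω} (Fin L') ℂ)
    (η lam : ℝ) (hη : 0 ≤ η) (hlam : 0 < lam)
    (hYY : Y * Yᴴ = Yt * Ytᴴ) (i : Fin 3) :
    (∀ u : Fin N → ℂ,
      (∃ X Z, isOpt Ω Y η lam i X u Z) ↔ (∃ X Z, isOpt Ω Yt η lam i X u Z)) ∧
    (∀ Q : Matrix (Fin L) (Fin L') ℂ, Qᴴ * Q = 1 → Yt = Y * Q →
      ∀ (X : Matrix (Fin L') (Fin L') ℂ) (u : Fin N → ℂ) (Z : Matrix (Fin N) (Fin L') ℂ),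
        isOpt Ω Yt η lam i X u Z → isOpt Ω Y η lam i (Q * X * Qᴴ) u (Z * Qᴴ)) := by
  obtain ⟨D', hD', hc'⟩ := exists_contraction Y Yt hYY
  obtain ⟨D, hD, hc⟩ := exists_contraction Yt Y hYY.symm
  constructor
  · intro u
    constructor
    · rintro ⟨X, Z, hopt⟩
      exact ⟨_, _, opt_transfer Ω Yt Y η lam hlam i hD' hc' hD hc hopt⟩
    · rintro ⟨X, Z, hopt⟩
      exact ⟨_, _, opt_transfer Ω Y Yt η lam hlam i hD hc hD' hc' hopt⟩
  · intro Q hQ hYQ X u Z hopt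
    have hQ' : ∀ (M : Matrix (Fin L') {x // x ∈ Ω} ℂ), Qᴴ * (Q * M) = M := by
      intro M; rw [← Matrix.mul_assoc, hQ, Matrix.one_mul]
    have hYtQ : Yt * Qᴴ = Y := by
      have key : Y * (Q * (Qᴴ * Yᴴ)) = Y * Yᴴ := by
        have h1 : Yt * Ytᴴ = Y * (Q * (Qᴴ * Yᴴ)) := by
          rw [hYQ, Matrix.conjTranspose_mul, Matrix.mul_assoc]
        rw [← h1, ← hYY]
      have h0 : (Y - Y * Q * Qᴴ) * (Y - Y * Q * Qᴴ)ᴴ = 0 := by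
        simp only [Matrix.sub_mul, Matrix.mul_sub, Matrix.conjTranspose_sub,
          Matrix.conjTranspose_mul, Matrix.conjTranspose_conjTranspose, Matrix.mul_assoc,
          hQ', key]
        simp
      rw [Matrix.self_mul_conjTranspose_eq_zero] at h0
      rw [hYQ]
      exact (sub_eq_zero.mp h0).symm
    have hcQ : ((1 : Matrix (Fin L') (Fin L') ℂ) - Qᴴ * Qᴴᴴ).PosSemidef := by
      have e : (1 : Matrix (Fin L') (Fin L') ℂ) - Qᴴ * Qᴴᴴ = 0 := by simp [hQ]
      rw [e]; exact Matrix.PosSemidef.zero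
    have h := opt_transfer Ω Y Yt η lam hlam i (D := Qᴴ) hYtQ hcQ hD' hc' hopt
    simpa using h
end
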